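/- arXiv:1703.07507 — 4 statements merged into one kernel-verified Lean document; each statement's English description precedes it below -/
import Mathlib

section
/- For each m ≥ 1, the following identity of formal power series in q holds: (1/(q;q)_∞) * Σ_{l=0}^{m-1} (-1)^l q^{l(3l-1)/2} (1 - q^{4l+2}) = 1 + (-1)^{m-1} Σ_{d=1}^∞ q^{d²+binomial(m,2)} / (q;q)_{2d} * (1-q^m)/(1-q^d) * qbinom(2d, d+m). -/
open Finset

/-- `(q;q)_n = ∏_{i=1}^n (1 - q^i)` as a formal power series over `ℚ`. -/
noncomputable def qp (n : ℕ) : PowerSeries ℚ :=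
  ∏ i ∈ Finset.range n, (1 - (PowerSeries.X : PowerSeries ℚ) ^ (i + 1))

/-- The Gaussian binomial coefficient `qbinom(n,k)`. -/
noncomputable def qbin (n k : ℕ) : PowerSeries ℚ :=
  if k ≤ n then qp n * (qp k * qp (n - k))⁻¹ else 0

/-- `(q;q)_∞ = ∏_{i=1}^∞ (1 - q^i)`, defined coefficientwise: its `n`-th coefficient
agrees with that of `(q;q)_n`, since the omitted factors are `1 + O(q^{n+1})`. -/
noncomputable def qpInf : PowerSeries ℚ :=
  PowerSeries.mk fun n => PowerSeries.coeff n (qp n)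

/-- The sum `Σ_{d=0}^∞ f d` of a sequence of power series in which the order of
`f d` tends to infinity (indeed `f d = O(q^d)` in our applications), defined
coefficientwise via truncation. -/
noncomputable def seriesSum (f : ℕ → PowerSeries ℚ) : PowerSeries ℚ :=
  PowerSeries.mk fun n => PowerSeries.coeff n (∑ d ∈ Finset.range (n + 1), f d)


open PowerSeries

lemma cc_one_sub_X_pow (j : ℕ) (hj : 1 ≤ j) :
    constantCoeff (1 - (X : PowerSeries ℚ) ^ j) = 1 := by
  have : j ≠ 0 := by omega
  simp [this]

lemma qp_zero : qp 0 = 1 := by simp [qp]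

lemma qp_succ (n : ℕ) : qp (n + 1) = qp n * (1 - (X : PowerSeries ℚ) ^ (n + 1)) := by
  rw [qp, Finset.prod_range_succ]; rfl

lemma cc_qp (n : ℕ) : constantCoeff (qp n) = 1 := by
  induction n with
  | zero => simp [qp_zero]
  | succ n ih => rw [qp_succ, map_mul, ih, cc_one_sub_X_pow _ (by omega), one_mul]

lemma qp_mul_inv (n : ℕ) : qp n * (qp n)⁻¹ = 1 :=
  PowerSeries.mul_inv_cancel _ (by rw [cc_qp]; norm_num)

lemma qp_inv_mul (n : ℕ) : (qp n)⁻¹ * qp n = 1 :=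
  PowerSeries.inv_mul_cancel _ (by rw [cc_qp]; norm_num)

lemma osx_mul_inv (j : ℕ) (hj : 1 ≤ j) :
    (1 - (X : PowerSeries ℚ) ^ j) * (1 - (X : PowerSeries ℚ) ^ j)⁻¹ = 1 :=
  PowerSeries.mul_inv_cancel _ (by rw [cc_one_sub_X_pow _ hj]; norm_num)

lemma osx_inv_mul (j : ℕ) (hj : 1 ≤ j) :
    (1 - (X : PowerSeries ℚ) ^ j)⁻¹ * (1 - (X : PowerSeries ℚ) ^ j) = 1 :=
  PowerSeries.inv_mul_cancel _ (by rw [cc_one_sub_X_pow _ hj]; norm_num)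

lemma qp_inv_succ (n : ℕ) :
    (qp (n + 1))⁻¹ = (qp n)⁻¹ * (1 - (X : PowerSeries ℚ) ^ (n + 1))⁻¹ := by
  rw [qp_succ, PowerSeries.mul_inv_rev, mul_comm]

lemma qp_inv_step (n : ℕ) :
    (qp n)⁻¹ = (qp (n + 1))⁻¹ * (1 - (X : PowerSeries ℚ) ^ (n + 1)) := by
  rw [qp_inv_succ, mul_assoc, osx_inv_mul _ (by omega), mul_one]

lemma qp_zero_inv : (qp 0)⁻¹ = 1 := by
  rw [qp_zero]; exact inv_one

lemma qbin_self (n : ℕ) : qbin n n = 1 := by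
  rw [qbin, if_pos le_rfl, Nat.sub_self, qp_zero, mul_one, qp_mul_inv]

lemma qbin_zero (n : ℕ) : qbin n 0 = 1 := by
  rw [qbin, if_pos (Nat.zero_le n), Nat.sub_zero, qp_zero, one_mul, qp_mul_inv]

lemma qbin_of_lt {n k : ℕ} (h : n < k) : qbin n k = 0 := by
  rw [qbin, if_neg (by omega)]

lemma qbin_eq {d r : ℕ} : qbin (d + r) d = qp (d + r) * ((qp d)⁻¹ * (qp r)⁻¹) := by
  rw [qbin, if_pos (by omega)]
  have : d + r - d = r := by omega
  rw [this, PowerSeries.mul_inv_rev, mul_comm ((qp r)⁻¹)]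

/-- q-Pascal: `qbin (a+1) (d+1) = X^(d+1) * qbin a (d+1) + qbin a d`. -/
lemma qbin_pascal (a d : ℕ) :
    qbin (a + 1) (d + 1)
      = (X : PowerSeries ℚ) ^ (d + 1) * qbin a (d + 1) + qbin a d := by
  rcases lt_or_ge a d with h | h
  · rw [qbin_of_lt (by omega), qbin_of_lt (by omega), qbin_of_lt (by omega)]
    simp
  · -- d ≤ a
    rcases eq_or_lt_of_le h with rfl | h2
    · -- d = a
      rw [qbin_self, qbin_of_lt (by omega), qbin_self, mul_zero, zero_add]
    · -- d < a, so d+1 ≤ a: write a = d + 1 + r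
      obtain ⟨r, rfl⟩ : ∃ r, a = d + 1 + r := ⟨a - (d+1), by omega⟩
      have e1 : d + 1 + r + 1 = (d + 1) + (r + 1) := by omega
      have e2 : d + 1 + r = (d + 1) + r := rfl
      have e3 : d + 1 + r = d + (r + 1) := by omega
      rw [e1, qbin_eq, e2, qbin_eq, e3, qbin_eq]
      -- goal: qp ((d+1)+(r+1)) * ((qp (d+1))⁻¹ * (qp (r+1))⁻¹)
      --     = X^(d+1) * (qp (d+1+r) * ((qp (d+1))⁻¹ * (qp r)⁻¹))
      --     + qp (d+1+r) * ((qp d)⁻¹ * (qp (r+1))⁻¹)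
      have hL : (d + 1) + (r + 1) = (d + 1 + r) + 1 := by omega
      rw [hL, qp_succ]
      have hqd : (qp d)⁻¹ = (qp (d+1))⁻¹ * (1 - (X : PowerSeries ℚ)^(d+1)) := qp_inv_step d
      have hqr : (qp r)⁻¹ = (qp (r+1))⁻¹ * (1 - (X : PowerSeries ℚ)^(r+1)) := qp_inv_step r
      rw [hqd, hqr]
      have hx : (1 - (X : PowerSeries ℚ)^(d+1+r+1))
          = (X : PowerSeries ℚ)^(d+1) * (1 - (X : PowerSeries ℚ)^(r+1))
            + (1 - (X : PowerSeries ℚ)^(d+1)) := by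
        have : (X : PowerSeries ℚ)^(d+1) * (X : PowerSeries ℚ)^(r+1)
            = (X : PowerSeries ℚ)^(d+1+r+1) := by rw [← pow_add]; ring_nf
        rw [← this]; ring
      rw [hx]; ring


noncomputable def Jsum (a k : ℕ) : PowerSeries ℚ :=
  ∑ d ∈ Finset.range (a + 1),
    (X : PowerSeries ℚ) ^ (d * (d + k)) * (qbin a d * (qp (d + k))⁻¹)

lemma Jsum_step_term (a k e : ℕ) (c : PowerSeries ℚ) :
    (X : PowerSeries ℚ) ^ (e * (e + k) + e) * (c * (qp (e + k))⁻¹)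
      + (X : PowerSeries ℚ) ^ ((e + 1) * (e + 1 + k)) * (c * (qp (e + k + 1))⁻¹)
      = (X : PowerSeries ℚ) ^ (e * (e + (k + 1))) * (c * (qp (e + (k + 1)))⁻¹) := by
  have h3 : e + (k + 1) = e + k + 1 := by omega
  have h1 : e * (e + k) + e = e * (e + k + 1) := by ring
  have h2 : (e + 1) * (e + 1 + k) = e * (e + k + 1) + (e + k + 1) := by ring
  rw [h3, h1, h2, qp_inv_step (e + k), pow_add]
  ring

lemma Jsum_eq : ∀ a k, Jsum a k = (qp (a + k))⁻¹ := by
  intro a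
  induction a with
  | zero =>
    intro k
    simp only [Jsum, Finset.sum_range_one, qbin_zero, one_mul, Nat.zero_mul, pow_zero,
      Nat.zero_add]
  | succ a ih =>
    intro k
    have key : Jsum (a + 1) k = Jsum a (k + 1) := by
      rw [Jsum, Finset.sum_range_succ']
      simp only [qbin_pascal]
      have expand : ∀ e ∈ Finset.range (a + 1),
          (X : PowerSeries ℚ) ^ ((e+1) * (e+1+k)) *
            (((X : PowerSeries ℚ)^(e+1) * qbin a (e+1) + qbin a e) * (qp (e+1+k))⁻¹)
          = ((X : PowerSeries ℚ) ^ ((e+1) * ((e+1)+k) + (e+1)) * (qbin a (e+1) * (qp ((e+1)+k))⁻¹))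
            + (X : PowerSeries ℚ) ^ ((e+1) * (e+1+k)) * (qbin a e * (qp (e+k+1))⁻¹) := by
        intro e _
        have : e + 1 + k = e + k + 1 := by omega
        rw [this, pow_add]
        ring
      rw [Finset.sum_congr rfl expand, Finset.sum_add_distrib]
      -- first sum: reindex
      have reindex : (∑ e ∈ Finset.range (a + 1),
          (X : PowerSeries ℚ) ^ ((e+1) * ((e+1)+k) + (e+1)) * (qbin a (e+1) * (qp ((e+1)+k))⁻¹))
          = (∑ d ∈ Finset.range (a + 1),
              (X : PowerSeries ℚ) ^ (d * (d+k) + d) * (qbin a d * (qp (d+k))⁻¹))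
            + (X : PowerSeries ℚ) ^ ((a+1) * ((a+1)+k) + (a+1)) * (qbin a (a+1) * (qp ((a+1)+k))⁻¹)
            - (X : PowerSeries ℚ) ^ (0 * (0+k) + 0) * (qbin a 0 * (qp (0+k))⁻¹) := by
        rw [eq_sub_iff_add_eq, ← Finset.sum_range_succ, Finset.sum_range_succ'
          (fun d => (X : PowerSeries ℚ) ^ (d * (d+k) + d) * (qbin a d * (qp (d+k))⁻¹)) (a+1)]
      rw [reindex, qbin_of_lt (Nat.lt_succ_self a), qbin_zero, qbin_zero]
      have assemble : ∀ (S B C : PowerSeries ℚ),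
          S + (X : PowerSeries ℚ) ^ ((a+1) * ((a+1)+k) + (a+1)) * ((0 : PowerSeries ℚ) * (qp ((a+1)+k))⁻¹)
            - (X : PowerSeries ℚ) ^ (0 * (0+k) + 0) * ((1 : PowerSeries ℚ) * (qp (0+k))⁻¹)
            + B + (X : PowerSeries ℚ) ^ (0 * (0+k)) * ((1 : PowerSeries ℚ) * (qp (0+k))⁻¹)
            = S + B := by
        intro S B C; ring
      rw [assemble _ _ 0, ← Finset.sum_add_distrib]
      exact Finset.sum_congr rfl fun e _ => Jsum_step_term a k e (qbin a e)
    rw [key, ih (k + 1)]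
    have : a + 1 + k = a + (k + 1) := by omega
    rw [this]

/-! ### Congruences -/

lemma coeff_eq_zero_of_dvd {N n : ℕ} {A : PowerSeries ℚ}
    (h : (X : PowerSeries ℚ) ^ N ∣ A) (hn : n < N) : PowerSeries.coeff n A = 0 :=
  PowerSeries.X_pow_dvd_iff.mp h n hn

lemma prod_sub_one_dvd {N : ℕ} {s : Finset ℕ} {f : ℕ → PowerSeries ℚ}
    (h : ∀ i ∈ s, (X : PowerSeries ℚ) ^ N ∣ (f i - 1)) :
    (X : PowerSeries ℚ) ^ N ∣ (∏ i ∈ s, f i - 1) := by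
  classical
  induction s using Finset.cons_induction with
  | empty => simp
  | cons a s ha ih =>
    rw [Finset.prod_cons]
    have h1 : (X : PowerSeries ℚ) ^ N ∣ (f a - 1) := h a (Finset.mem_cons_self a s)
    have h2 : (X : PowerSeries ℚ) ^ N ∣ (∏ i ∈ s, f i - 1) :=
      ih fun i hi => h i (Finset.mem_cons_of_mem hi)
    have : f a * ∏ i ∈ s, f i - 1
        = f a * (∏ i ∈ s, f i - 1) + (f a - 1) := by ring
    rw [this]
    exact dvd_add (Dvd.dvd.mul_left h2 _) h1

lemma qp_add_eq (n r : ℕ) :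
    qp (n + r) = qp n * ∏ i ∈ Finset.range r, (1 - (X : PowerSeries ℚ) ^ (n + i + 1)) := by
  rw [qp, Finset.prod_range_add, ← qp]

lemma qp_congr (n r : ℕ) :
    (X : PowerSeries ℚ) ^ (n + 1) ∣ (qp (n + r) - qp n) := by
  rw [qp_add_eq]
  have : qp n * ∏ i ∈ Finset.range r, (1 - (X : PowerSeries ℚ) ^ (n + i + 1)) - qp n
      = qp n * (∏ i ∈ Finset.range r, (1 - (X : PowerSeries ℚ) ^ (n + i + 1)) - 1) := by ring
  rw [this]
  refine Dvd.dvd.mul_left (prod_sub_one_dvd fun i _ => ?_) _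
  have : (1 : PowerSeries ℚ) - (X : PowerSeries ℚ) ^ (n + i + 1) - 1
      = -((X : PowerSeries ℚ) ^ (n + 1) * (X : PowerSeries ℚ) ^ i) := by
    rw [← pow_add]; ring_nf
  rw [this]
  exact dvd_neg.mpr (Dvd.dvd.mul_right dvd_rfl _)

lemma coeff_qp_stable {n a : ℕ} (h : n ≤ a) :
    PowerSeries.coeff n (qp a) = PowerSeries.coeff n (qp n) := by
  obtain ⟨r, rfl⟩ : ∃ r, a = n + r := ⟨a - n, by omega⟩
  have := coeff_eq_zero_of_dvd (qp_congr n r) (Nat.lt_succ_self n)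
  rw [map_sub] at this
  linarith

lemma coeff_qpInf (n : ℕ) :
    PowerSeries.coeff n qpInf = PowerSeries.coeff n (qp n) := by
  rw [qpInf, PowerSeries.coeff_mk]

lemma qpInf_congr (a : ℕ) :
    (X : PowerSeries ℚ) ^ (a + 1) ∣ (qpInf - qp a) := by
  rw [PowerSeries.X_pow_dvd_iff]
  intro n hn
  rw [map_sub, coeff_qpInf, coeff_qp_stable (by omega : n ≤ a), sub_self]

lemma cc_qpInf : PowerSeries.constantCoeff qpInf = 1 := by
  rw [← PowerSeries.coeff_zero_eq_constantCoeff_apply, coeff_qpInf, qp_zero]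
  simp

lemma qpInf_mul_inv : qpInf * qpInf⁻¹ = 1 :=
  PowerSeries.mul_inv_cancel _ (by rw [cc_qpInf]; norm_num)

lemma qpInf_inv_mul : qpInf⁻¹ * qpInf = 1 :=
  PowerSeries.inv_mul_cancel _ (by rw [cc_qpInf]; norm_num)

lemma inv_congr {N : ℕ} {A B : PowerSeries ℚ}
    (hA : PowerSeries.constantCoeff A = 1) (hB : PowerSeries.constantCoeff B = 1)
    (h : (X : PowerSeries ℚ) ^ N ∣ (A - B)) :
    (X : PowerSeries ℚ) ^ N ∣ (A⁻¹ - B⁻¹) := by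
  have hA' : A * A⁻¹ = 1 := PowerSeries.mul_inv_cancel _ (by rw [hA]; norm_num)
  have hB' : B⁻¹ * B = 1 := PowerSeries.inv_mul_cancel _ (by rw [hB]; norm_num)
  have key : A⁻¹ - B⁻¹ = B⁻¹ * (B - A) * A⁻¹ := by
    calc A⁻¹ - B⁻¹ = (B⁻¹ * B) * A⁻¹ - B⁻¹ * (A * A⁻¹) := by rw [hA', hB', one_mul, mul_one]
    _ = B⁻¹ * (B - A) * A⁻¹ := by ring
  rw [key]
  have h'' : (X : PowerSeries ℚ) ^ N ∣ (B - A) := by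
    have := dvd_neg.mpr h
    rwa [neg_sub] at this
  exact Dvd.dvd.mul_right (Dvd.dvd.mul_left h'' _) _

lemma qbin_congr (d r : ℕ) :
    (X : PowerSeries ℚ) ^ (r + 1) ∣ (qbin (d + r) d - (qp d)⁻¹) := by
  rw [qbin_eq]
  have hdr : d + r = r + d := by omega
  rw [hdr, qp_add_eq r d]
  have key : qp r * (∏ i ∈ Finset.range d, (1 - (X : PowerSeries ℚ) ^ (r + i + 1)))
        * ((qp d)⁻¹ * (qp r)⁻¹) - (qp d)⁻¹
      = (qp d)⁻¹ * (((qp r)⁻¹ * qp r)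
          * (∏ i ∈ Finset.range d, (1 - (X : PowerSeries ℚ) ^ (r + i + 1))) - 1) := by
    ring
  rw [key, qp_inv_mul, one_mul]
  refine Dvd.dvd.mul_left (prod_sub_one_dvd fun i _ => ?_) _
  have : (1 : PowerSeries ℚ) - (X : PowerSeries ℚ) ^ (r + i + 1) - 1
      = -((X : PowerSeries ℚ) ^ (r + 1) * (X : PowerSeries ℚ) ^ i) := by
    rw [← pow_add]; ring_nf
  rw [this]
  exact dvd_neg.mpr (Dvd.dvd.mul_right dvd_rfl _)

lemma qpInf_inv_congr (a : ℕ) :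
    (X : PowerSeries ℚ) ^ (a + 1) ∣ (qpInf⁻¹ - (qp a)⁻¹) :=
  inv_congr cc_qpInf (cc_qp a) (qpInf_congr a)

/-! ### seriesSum toolkit -/

def Ord1 (f : ℕ → PowerSeries ℚ) : Prop := ∀ d, (X : PowerSeries ℚ) ^ d ∣ f d

lemma coeff_seriesSum (f : ℕ → PowerSeries ℚ) (n : ℕ) :
    PowerSeries.coeff n (seriesSum f)
      = PowerSeries.coeff n (∑ d ∈ Finset.range (n + 1), f d) := by
  rw [seriesSum, PowerSeries.coeff_mk]

lemma coeff_seriesSum_of {f : ℕ → PowerSeries ℚ} (hf : Ord1 f) {n K : ℕ} (h : n < K) :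
    PowerSeries.coeff n (seriesSum f)
      = PowerSeries.coeff n (∑ d ∈ Finset.range K, f d) := by
  rw [coeff_seriesSum]
  rw [map_sum, map_sum]
  have : ∀ d ∈ Finset.range K, d ∉ Finset.range (n+1) → PowerSeries.coeff n (f d) = 0 := by
    intro d hd1 hd2
    have hdn : n < d := by
      simp only [Finset.mem_range] at hd2
      omega
    exact coeff_eq_zero_of_dvd (hf d) hdn
  exact Finset.sum_subset (Finset.range_subset_range.mpr h) this

lemma seriesSum_trunc {f : ℕ → PowerSeries ℚ} (hf : Ord1 f) (n : ℕ) :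
    (X : PowerSeries ℚ) ^ (n + 1) ∣ (seriesSum f - ∑ d ∈ Finset.range (n + 1), f d) := by
  rw [PowerSeries.X_pow_dvd_iff]
  intro j hj
  rw [map_sub, coeff_seriesSum_of hf hj, sub_self]

lemma seriesSum_dvd {f : ℕ → PowerSeries ℚ} (hf : Ord1 f) {N : ℕ}
    (hN : ∀ d, (X : PowerSeries ℚ) ^ N ∣ f d) :
    (X : PowerSeries ℚ) ^ N ∣ seriesSum f := by
  rw [PowerSeries.X_pow_dvd_iff]
  intro j hj
  rw [coeff_seriesSum, map_sum]
  exact Finset.sum_eq_zero fun d _ => coeff_eq_zero_of_dvd (hN d) hj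

lemma seriesSum_add (f g : ℕ → PowerSeries ℚ) :
    seriesSum (fun d => f d + g d) = seriesSum f + seriesSum g := by
  apply PowerSeries.ext
  intro n
  rw [map_add, coeff_seriesSum, coeff_seriesSum, coeff_seriesSum, ← map_add,
    ← Finset.sum_add_distrib]

lemma seriesSum_mul_left {f : ℕ → PowerSeries ℚ} (hf : Ord1 f) (C : PowerSeries ℚ) :
    C * seriesSum f = seriesSum (fun d => C * f d) := by
  apply PowerSeries.ext
  intro n
  have h1 : PowerSeries.coeff n (C * seriesSum f)
      = PowerSeries.coeff n (C * ∑ d ∈ Finset.range (n + 1), f d) := by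
    have : C * seriesSum f - C * ∑ d ∈ Finset.range (n + 1), f d
        = C * (seriesSum f - ∑ d ∈ Finset.range (n + 1), f d) := by ring
    have hd := coeff_eq_zero_of_dvd
      (Dvd.dvd.mul_left (seriesSum_trunc hf n) C) (Nat.lt_succ_self n)
    rw [← this] at hd
    rw [map_sub] at hd
    linarith
  rw [h1, coeff_seriesSum, Finset.mul_sum]

lemma seriesSum_peel {f : ℕ → PowerSeries ℚ} (hf : Ord1 f) :
    seriesSum f = f 0 + seriesSum (fun d => f (d + 1)) := by
  apply PowerSeries.ext
  intro n
  rw [coeff_seriesSum_of hf (show n < n + 2 by omega), Finset.sum_range_succ']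
  rw [map_add, map_add, coeff_seriesSum (fun d => f (d + 1))]
  ring

lemma Ord1_shift {f : ℕ → PowerSeries ℚ} (hf : Ord1 f) : Ord1 (fun d => f (d + 1)) := by
  intro d
  exact dvd_trans (pow_dvd_pow _ (by omega)) (hf (d + 1))

lemma seriesSum_shift {f : ℕ → PowerSeries ℚ} (hf : Ord1 f) (h0 : f 0 = 0) :
    seriesSum f = seriesSum (fun d => f (d + 1)) := by
  rw [seriesSum_peel hf, h0, zero_add]

/-! ### Infinite Durfee rectangle identity -/

noncomputable def uD (k d : ℕ) : PowerSeries ℚ :=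
  (X : PowerSeries ℚ) ^ (d * (d + k)) * ((qp d)⁻¹ * (qp (d + k))⁻¹)

lemma Ord1_of_exp {f : ℕ → PowerSeries ℚ} {e : ℕ → ℕ} {g : ℕ → PowerSeries ℚ}
    (hf : ∀ d, f d = (X : PowerSeries ℚ) ^ (e d) * g d) (he : ∀ d, d ≤ e d) : Ord1 f := by
  intro d
  rw [hf d]
  exact Dvd.dvd.mul_right (pow_dvd_pow _ (he d)) _

lemma le_self_mul_add (d k : ℕ) : d ≤ d * (d + k) := by
  rcases Nat.eq_zero_or_pos d with rfl | hd0
  · simp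
  · calc d = d * 1 := (Nat.mul_one d).symm
      _ ≤ d * (d + k) := Nat.mul_le_mul_left d (by omega)

lemma Ord1_uD (k : ℕ) : Ord1 (uD k) :=
  Ord1_of_exp (fun d => rfl) (fun d => le_self_mul_add d k)

lemma durfee (k : ℕ) : seriesSum (uD k) = qpInf⁻¹ := by
  apply PowerSeries.ext
  intro n
  rw [coeff_seriesSum]
  have h2 : PowerSeries.coeff n qpInf⁻¹ = PowerSeries.coeff n ((qp (n + k))⁻¹) := by
    have := coeff_eq_zero_of_dvd (qpInf_inv_congr (n + k)) (show n < n + k + 1 by omega)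
    rw [map_sub] at this
    linarith
  have h3 : (qp (n + k))⁻¹ = Jsum n k := (Jsum_eq n k).symm
  rw [h2, h3, Jsum]
  have key : (X : PowerSeries ℚ) ^ (n + 1) ∣
      ((∑ d ∈ Finset.range (n + 1), uD k d)
        - ∑ d ∈ Finset.range (n + 1), (X : PowerSeries ℚ) ^ (d * (d + k)) * (qbin n d * (qp (d + k))⁻¹)) := by
    rw [← Finset.sum_sub_distrib]
    refine Finset.dvd_sum fun d hd => ?_
    obtain ⟨r, rfl⟩ : ∃ r, n = d + r := ⟨n - d, by
      simp only [Finset.mem_range] at hd; omega⟩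
    have step : uD k d - (X : PowerSeries ℚ) ^ (d * (d + k)) * (qbin (d + r) d * (qp (d + k))⁻¹)
        = (X : PowerSeries ℚ) ^ (d * (d + k)) * (((qp d)⁻¹ - qbin (d + r) d) * (qp (d + k))⁻¹) := by
      rw [uD]; ring
    rw [step]
    have hdvd1 : (X : PowerSeries ℚ) ^ (r + 1) ∣ ((qp d)⁻¹ - qbin (d + r) d) := by
      have := qbin_congr d r
      have h4 : (qp d)⁻¹ - qbin (d + r) d = -(qbin (d + r) d - (qp d)⁻¹) := by ring
      rw [h4]
      exact dvd_neg.mpr this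
    have : (X : PowerSeries ℚ) ^ (d * (d + k)) * ((X : PowerSeries ℚ) ^ (r + 1))
        ∣ (X : PowerSeries ℚ) ^ (d * (d + k)) * (((qp d)⁻¹ - qbin (d + r) d) * (qp (d + k))⁻¹) :=
      mul_dvd_mul_left _ (Dvd.dvd.mul_right hdvd1 _)
    refine dvd_trans ?_ this
    rw [← pow_add]
    apply pow_dvd_pow
    have := le_self_mul_add d k
    omega
  have := coeff_eq_zero_of_dvd key (show n < n + 1 by omega)
  rw [map_sub] at this
  linarith

/-! ### The series `X_m` and the cross identity -/

noncomputable def xt (b f : ℕ) : PowerSeries ℚ :=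
  (X : PowerSeries ℚ) ^ (f * (f + 2*b + 2)) *
    ((1 - (X : PowerSeries ℚ) ^ (f + b + 1))⁻¹ * ((qp f)⁻¹ * (qp (f + 2*b + 1))⁻¹))

noncomputable def yT (b f : ℕ) : PowerSeries ℚ :=
  (X : PowerSeries ℚ) ^ (f * (f + 2*b + 2)) * ((qp f)⁻¹ * (qp (f + 2*b + 1))⁻¹)

noncomputable def zT (b f : ℕ) : PowerSeries ℚ :=
  (X : PowerSeries ℚ) ^ (f * (f + 2*b + 2) + (f + b + 1)) *
    ((1 - (X : PowerSeries ℚ) ^ (f + b + 1))⁻¹ * ((qp f)⁻¹ * (qp (f + 2*b + 1))⁻¹))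

noncomputable def wT (b f : ℕ) : PowerSeries ℚ :=
  (X : PowerSeries ℚ) ^ (b + 1) * ((1 + (X : PowerSeries ℚ) ^ (f + b + 1)) * uD (2*b + 2) f)

lemma Ord1_xt (b : ℕ) : Ord1 (xt b) :=
  Ord1_of_exp (fun f => rfl) (fun f => le_self_mul_add f (2*b+2))

lemma Ord1_yT (b : ℕ) : Ord1 (yT b) :=
  Ord1_of_exp (fun f => rfl) (fun f => le_self_mul_add f (2*b+2))

lemma Ord1_zT (b : ℕ) : Ord1 (zT b) :=
  Ord1_of_exp (fun f => rfl) (fun f =>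
    le_trans (le_self_mul_add f (2*b+2)) (Nat.le_add_right _ _))

lemma Ord1_wT (b : ℕ) : Ord1 (wT b) := by
  intro f
  have : wT b f = (X : PowerSeries ℚ) ^ (f * (f + (2*b+2))) *
      ((X : PowerSeries ℚ) ^ (b + 1) * ((1 + (X : PowerSeries ℚ) ^ (f + b + 1)) *
        ((qp f)⁻¹ * (qp (f + (2*b+2)))⁻¹))) := by
    rw [wT, uD]; ring
  rw [this]
  exact Dvd.dvd.mul_right (pow_dvd_pow _ (le_self_mul_add f (2*b+2))) _

lemma geo_split (j : ℕ) (hj : 1 ≤ j) :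
    (1 - (X : PowerSeries ℚ) ^ j)⁻¹
      = 1 + (X : PowerSeries ℚ) ^ j * (1 - (X : PowerSeries ℚ) ^ j)⁻¹ := by
  have h := osx_mul_inv j hj
  linear_combination h

lemma xt_split (b f : ℕ) : xt b f = yT b f + zT b f := by
  rw [xt, yT, zT]
  conv_lhs => rw [geo_split (f + b + 1) (by omega)]
  ring

/-- the cross-term recombination: `zT b (f+1) + X^(3b+4) xt (b+1) f = wT b (f+1)` -/
lemma cross_term (b f : ℕ) :
    zT b (f + 1) + (X : PowerSeries ℚ) ^ (3*b + 4) * xt (b + 1) f = wT b (f + 1) := by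
  rw [zT, xt, wT, uD]
  have e1 : f + 1 + 2*b + 1 = f + 2*b + 2 := by omega
  have e2 : f + 2*(b+1) + 1 = f + 2*b + 3 := by omega
  have e3 : f + 1 + b + 1 = f + b + 2 := by omega
  have e4 : f + (b + 1) + 1 = f + b + 2 := by omega
  have e5 : f + 1 + (2*b + 2) = f + 2*b + 3 := by omega
  rw [e1, e2, e3, e4, e5]
  have hq1 : (qp f)⁻¹ = (qp (f+1))⁻¹ * (1 - (X : PowerSeries ℚ) ^ (f+1)) := qp_inv_step f
  have hq2 : (qp (f + 2*b + 2))⁻¹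
      = (qp (f + 2*b + 3))⁻¹ * (1 - (X : PowerSeries ℚ) ^ (f + 2*b + 3)) := by
    have := qp_inv_step (f + 2*b + 2)
    have e : f + 2*b + 2 + 1 = f + 2*b + 3 := by omega
    rwa [e] at this
  rw [hq1, hq2]
  have hG := osx_mul_inv (f + b + 2) (by omega)
  -- linear_combination with coefficient c = X^((f+1)*(f+2b+3)+(b+1)) * (1+X^(f+b+2)) * Q
  linear_combination ((X : PowerSeries ℚ) ^ ((f+1) * (f + 2*b + 3) + (b + 1)) *
    ((1 + (X : PowerSeries ℚ) ^ (f + b + 2)) *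
      ((qp (f+1))⁻¹ * (qp (f + 2*b + 3))⁻¹))) * hG

noncomputable def vT (b f : ℕ) : PowerSeries ℚ :=
  (X : PowerSeries ℚ) ^ f * uD (2*b + 2) f

lemma Ord1_vT (b : ℕ) : Ord1 (vT b) := by
  intro f
  exact Dvd.dvd.mul_right (pow_dvd_pow _ le_rfl) _

lemma z0_eq_w0 (b : ℕ) : zT b 0 = wT b 0 := by
  rw [zT, wT, uD]
  simp only [Nat.zero_mul, Nat.zero_add, pow_zero, one_mul, Nat.mul_zero]
  have hq : (qp (2*b + 2))⁻¹ = (qp (2*b+1))⁻¹ * (1 - (X : PowerSeries ℚ) ^ (2*b+2))⁻¹ := by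
    have := qp_inv_succ (2*b + 1)
    have e : 2*b + 1 + 1 = 2*b + 2 := by omega
    rwa [e] at this
  rw [hq, qp_zero_inv]
  have hA := osx_mul_inv (b + 1) (by omega)
  have hB := osx_mul_inv (2*b + 2) (by omega)
  linear_combination ((X : PowerSeries ℚ) ^ (b+1) * (qp (2*b+1))⁻¹ *
      ((1 + (X : PowerSeries ℚ) ^ (b+1)) * (1 - (X : PowerSeries ℚ) ^ (2*b+2))⁻¹)) * hA
    - ((X : PowerSeries ℚ) ^ (b+1) * (qp (2*b+1))⁻¹ *
        (1 - (X : PowerSeries ℚ) ^ (b+1))⁻¹) * hB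

lemma wT_split (b f : ℕ) :
    wT b f = (X : PowerSeries ℚ) ^ (b+1) * uD (2*b+2) f
      + (X : PowerSeries ℚ) ^ (2*b+2) * vT b f := by
  rw [wT, vT, uD]
  ring

lemma yT_plus (b f : ℕ) :
    yT b f + (X : PowerSeries ℚ) ^ (2*b+2) * vT b f = uD (2*b+2) f := by
  rw [yT, vT, uD]
  have hq : (qp (f + 2*b + 1))⁻¹
      = (qp (f + (2*b+2)))⁻¹ * (1 - (X : PowerSeries ℚ) ^ (f + (2*b + 2))) := by
    have := qp_inv_step (f + 2*b + 1)
    have e2 : f + 2*b + 1 + 1 = f + (2*b + 2) := by omega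
    rw [e2] at this
    exact this
  rw [hq]
  ring

/-- The key cross identity `X_m + q^(3m+1) X_{m+1} = (1+q^m)/(q;q)_∞` with `m = b+1`. -/
lemma cross (b : ℕ) :
    seriesSum (xt b) + (X : PowerSeries ℚ) ^ (3*b + 4) * seriesSum (xt (b+1))
      = (1 + (X : PowerSeries ℚ) ^ (b+1)) * qpInf⁻¹ := by
  have h1 : seriesSum (xt b) = seriesSum (yT b) + seriesSum (zT b) := by
    rw [← seriesSum_add]
    exact congrArg seriesSum (funext (xt_split b))
  have h2 : seriesSum (zT b) = zT b 0 + seriesSum (fun f => zT b (f+1)) :=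
    seriesSum_peel (Ord1_zT b)
  have h3 : (X : PowerSeries ℚ) ^ (3*b + 4) * seriesSum (xt (b+1))
      = seriesSum (fun f => (X : PowerSeries ℚ) ^ (3*b + 4) * xt (b+1) f) :=
    seriesSum_mul_left (Ord1_xt (b+1)) _
  have h4 : seriesSum (fun f => zT b (f+1))
        + seriesSum (fun f => (X : PowerSeries ℚ) ^ (3*b + 4) * xt (b+1) f)
      = seriesSum (fun f => wT b (f+1)) := by
    rw [← seriesSum_add]
    exact congrArg seriesSum (funext fun f => cross_term b f)
  have h5 : wT b 0 + seriesSum (fun f => wT b (f+1)) = seriesSum (wT b) :=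
    (seriesSum_peel (Ord1_wT b)).symm
  have h6 : seriesSum (wT b) = (X : PowerSeries ℚ) ^ (b+1) * qpInf⁻¹
      + (X : PowerSeries ℚ) ^ (2*b+2) * seriesSum (vT b) := by
    have e1 : seriesSum (wT b) = seriesSum (fun f => (X : PowerSeries ℚ) ^ (b+1) * uD (2*b+2) f
        + (X : PowerSeries ℚ) ^ (2*b+2) * vT b f) :=
      congrArg seriesSum (funext (wT_split b))
    rw [e1, seriesSum_add, ← seriesSum_mul_left (Ord1_uD (2*b+2)),
      ← seriesSum_mul_left (Ord1_vT b), durfee]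
  have h7 : seriesSum (yT b) + (X : PowerSeries ℚ) ^ (2*b+2) * seriesSum (vT b) = qpInf⁻¹ := by
    rw [seriesSum_mul_left (Ord1_vT b), ← seriesSum_add, ← durfee (2*b+2)]
    exact congrArg seriesSum (funext (yT_plus b))
  have hz0 : zT b 0 = wT b 0 := z0_eq_w0 b
  linear_combination h1 + h2 + h3 + h4 + hz0 + h5 + h6 + h7

/-! ### pentagonal numbers -/

def gg : ℕ → ℕ
  | 0 => 0
  | (m+1) => gg m + 3*m + 1

lemma gg_succ (m : ℕ) : gg (m+1) = gg m + 3*m + 1 := rfl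

lemma two_gg (l : ℕ) : 2 * gg l + l = 3 * (l * l) := by
  induction l with
  | zero => rfl
  | succ l ih =>
    rw [gg_succ]
    have : (l+1) * (l+1) = l*l + 2*l + 1 := by ring
    rw [this]
    omega

lemma gg_formula (l : ℕ) : l * (3 * l - 1) / 2 = gg l := by
  have h : l * (3 * l - 1) = 2 * gg l := by
    cases l with
    | zero => rfl
    | succ l =>
      have e : 3 * (l+1) - 1 = 3*l + 2 := by omega
      rw [e]
      have h2 := two_gg (l+1)
      have e2 : (l+1) * (3*l+2) = 3 * ((l+1)*(l+1)) - (l+1) := by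
        have : 3 * ((l+1)*(l+1)) = (l+1) * (3*l+2) + (l+1) := by ring
        omega
      rw [e2]
      omega
  rw [h]
  omega

lemma gg_ge (j : ℕ) : j ≤ gg j := by
  induction j with
  | zero => simp
  | succ j ih => rw [gg_succ]; omega

lemma gg_mono {a b : ℕ} (h : a ≤ b) : gg a ≤ gg b := by
  induction b with
  | zero =>
    have : a = 0 := by omega
    subst this
    exact le_refl _
  | succ b ih =>
    rcases Nat.eq_or_lt_of_le h with rfl | h2
    · exact le_refl _
    · rw [gg_succ]
      have := ih (by omega)
      omega

lemma two_choose (m : ℕ) : 2 * m.choose 2 + m = m * m := by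
  induction m with
  | zero => rfl
  | succ m ih =>
    have e : (m+1).choose 2 = m.choose 1 + m.choose 2 := Nat.choose_succ_succ m 1
    rw [e, Nat.choose_one_right]
    have : (m+1) * (m+1) = m*m + 2*m + 1 := by ring
    omega

/-! ### the tail series E_m -/

noncomputable def eT (m i : ℕ) : PowerSeries ℚ :=
  (-1 : PowerSeries ℚ) ^ i *
    ((X : PowerSeries ℚ) ^ (gg (m+i)) + (X : PowerSeries ℚ) ^ (gg (m+i) + (m+i)))

noncomputable def Eser (m : ℕ) : PowerSeries ℚ := seriesSum (eT m)

lemma Ord1_eT (m : ℕ) : Ord1 (eT m) := by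
  intro i
  have h1 : i ≤ gg (m+i) := le_trans (by omega) (gg_ge (m+i))
  exact Dvd.dvd.mul_left
    (dvd_add (pow_dvd_pow _ h1) (pow_dvd_pow _ (by omega))) _

lemma eT_dvd (m : ℕ) : ∀ i, (X : PowerSeries ℚ) ^ (gg m) ∣ eT m i := by
  intro i
  have h1 : gg m ≤ gg (m+i) := gg_mono (by omega)
  exact Dvd.dvd.mul_left
    (dvd_add (pow_dvd_pow _ h1) (pow_dvd_pow _ (by omega))) _

lemma Eser_dvd (m : ℕ) : (X : PowerSeries ℚ) ^ (gg m) ∣ Eser m :=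
  seriesSum_dvd (Ord1_eT m) (eT_dvd m)

lemma Erec (m : ℕ) :
    Eser m + Eser (m+1)
      = (X : PowerSeries ℚ) ^ (gg m) + (X : PowerSeries ℚ) ^ (gg m + m) := by
  have hpeel : Eser m = eT m 0 + seriesSum (fun i => eT m (i+1)) :=
    seriesSum_peel (Ord1_eT m)
  have h0 : eT m 0 = (X : PowerSeries ℚ) ^ (gg m) + (X : PowerSeries ℚ) ^ (gg m + m) := by
    rw [eT]
    simp
  have hterm : ∀ i, eT m (i+1) = (-1 : PowerSeries ℚ) * eT (m+1) i := by
    intro i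
    rw [eT, eT]
    have e : m + (i+1) = m + 1 + i := by omega
    rw [e, pow_succ]
    ring
  have hshift : seriesSum (fun i => eT m (i+1))
      = seriesSum (fun i => (-1 : PowerSeries ℚ) * eT (m+1) i) :=
    congrArg seriesSum (funext hterm)
  have hneg : seriesSum (fun i => (-1 : PowerSeries ℚ) * eT (m+1) i)
      = (-1 : PowerSeries ℚ) * Eser (m+1) := by
    rw [Eser, seriesSum_mul_left (Ord1_eT (m+1))]
  rw [hpeel, h0, hshift, hneg]
  ring

lemma seriesSum_sub (f g : ℕ → PowerSeries ℚ) :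
    seriesSum (fun d => f d - g d) = seriesSum f - seriesSum g := by
  apply PowerSeries.ext
  intro n
  rw [map_sub, coeff_seriesSum, coeff_seriesSum, coeff_seriesSum, ← map_sub,
    ← Finset.sum_sub_distrib]

lemma seriesSum_shift_many (j : ℕ) {f : ℕ → PowerSeries ℚ} (hf : Ord1 f)
    (h : ∀ d, d < j → f d = 0) :
    seriesSum f = seriesSum (fun d => f (d + j)) := by
  induction j with
  | zero => exact congrArg seriesSum (funext fun d => by rw [Nat.add_zero])
  | succ j ih =>
    have step1 : seriesSum f = seriesSum (fun d => f (d + j)) :=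
      ih (fun d hd => h d (by omega))
    rw [step1]
    have hOrd : Ord1 (fun d => f (d + j)) := by
      intro d
      exact dvd_trans (pow_dvd_pow _ (by omega)) (hf (d + j))
    have h0 : f (0 + j) = 0 := h (0 + j) (by omega)
    rw [seriesSum_shift hOrd h0]
    exact congrArg seriesSum (funext fun d => by
      have : d + 1 + j = d + (j + 1) := by omega
      rw [this])

/-! ### evaluation of `X_1` and the B-chain -/

lemma X1_eval : (X : PowerSeries ℚ) * seriesSum (xt 0) = qpInf⁻¹ - 1 := by
  have h1 : (X : PowerSeries ℚ) * seriesSum (xt 0)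
      = seriesSum (fun f => (X : PowerSeries ℚ) * xt 0 f) :=
    seriesSum_mul_left (Ord1_xt 0) _
  have h2 : ∀ f, (X : PowerSeries ℚ) * xt 0 f = uD 0 (f + 1) := by
    intro f
    rw [xt, uD]
    have e1 : f + 2*0 + 1 = f + 1 := by omega
    have e2 : f + 0 + 1 = f + 1 := by omega
    have e3 : f + 2*0 + 2 = f + 2 := by omega
    have e4 : (f+1) + 0 = f + 1 := by omega
    rw [e1, e2, e3, e4]
    have hq : (qp (f+1))⁻¹ = (qp f)⁻¹ * (1 - (X : PowerSeries ℚ) ^ (f+1))⁻¹ := qp_inv_succ f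
    rw [hq]
    ring
  have h3 : seriesSum (fun f => (X : PowerSeries ℚ) * xt 0 f)
      = seriesSum (fun f => uD 0 (f + 1)) := congrArg seriesSum (funext h2)
  have h4 : seriesSum (uD 0) = uD 0 0 + seriesSum (fun f => uD 0 (f+1)) :=
    seriesSum_peel (Ord1_uD 0)
  have h5 : uD 0 0 = 1 := by
    rw [uD]
    simp [qp_zero_inv]
  have h6 := durfee 0
  rw [h1, h3]
  rw [h4, h5] at h6
  linear_combination h6

noncomputable def Bb (b : ℕ) : PowerSeries ℚ :=
  (X : PowerSeries ℚ) ^ (gg (b+1)) * seriesSum (xt b)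

lemma Bb_rec (b : ℕ) :
    Bb b + Bb (b+1)
      = ((X : PowerSeries ℚ) ^ (gg (b+1)) + (X : PowerSeries ℚ) ^ (gg (b+1) + (b+1)))
          * qpInf⁻¹ := by
  have h := cross b
  have e : gg (b+2) = gg (b+1) + (3*b + 4) := by
    rw [gg_succ (b+1)]
    omega
  rw [Bb, Bb, e]
  calc (X : PowerSeries ℚ) ^ gg (b+1) * seriesSum (xt b)
        + (X : PowerSeries ℚ) ^ (gg (b+1) + (3*b+4)) * seriesSum (xt (b+1))
      = (X : PowerSeries ℚ) ^ gg (b+1) *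
          (seriesSum (xt b) + (X : PowerSeries ℚ) ^ (3*b+4) * seriesSum (xt (b+1))) := by
        rw [pow_add]; ring
    _ = (X : PowerSeries ℚ) ^ gg (b+1) *
          ((1 + (X : PowerSeries ℚ) ^ (b+1)) * qpInf⁻¹) := by rw [h]
    _ = _ := by rw [pow_add]; ring

lemma Bb_dvd (b : ℕ) : (X : PowerSeries ℚ) ^ (gg (b+1)) ∣ Bb b :=
  Dvd.dvd.mul_right (pow_dvd_pow _ le_rfl) _

noncomputable def Dd (b : ℕ) : PowerSeries ℚ := Bb b - Eser (b+1) * qpInf⁻¹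

lemma Dd_rec (b : ℕ) : Dd b = - Dd (b+1) := by
  rw [Dd, Dd]
  have h1 := Bb_rec b
  have h2 := Erec (b+1)
  linear_combination h1 - qpInf⁻¹ * h2

lemma Dd_dvd (b : ℕ) : (X : PowerSeries ℚ) ^ (gg (b+1)) ∣ Dd b := by
  rw [Dd]
  exact dvd_sub (Bb_dvd b) (Dvd.dvd.mul_right (Eser_dvd (b+1)) _)

lemma Dd_shift (b M : ℕ) : Dd b = (-1 : PowerSeries ℚ) ^ M * Dd (b + M) := by
  induction M with
  | zero => simp
  | succ M ih =>
    rw [ih, Dd_rec (b + M)]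
    have e : b + (M + 1) = b + M + 1 := by omega
    rw [e, pow_succ]
    ring

lemma Dd_zero (b : ℕ) : Dd b = 0 := by
  apply PowerSeries.ext
  intro n
  have h1 := Dd_shift b (n + 1)
  have h2 : (X : PowerSeries ℚ) ^ (n + 1) ∣ Dd (b + (n+1)) := by
    refine dvd_trans (pow_dvd_pow _ ?_) (Dd_dvd (b + (n+1)))
    have := gg_ge (b + (n+1) + 1)
    omega
  have h3 : (X : PowerSeries ℚ) ^ (n + 1) ∣ Dd b := by
    rw [h1]
    exact Dvd.dvd.mul_left h2 _
  rw [coeff_eq_zero_of_dvd h3 (by omega)]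
  simp

lemma B_eq (b : ℕ) : Bb b = Eser (b+1) * qpInf⁻¹ := by
  have := Dd_zero b
  rw [Dd, sub_eq_zero] at this
  exact this

/-- Euler's pentagonal number theorem, in tail form. -/
lemma pentagonal_tail : Eser 1 = 1 - qpInf := by
  have h1 : Bb 0 = qpInf⁻¹ - 1 := by
    rw [Bb]
    have e : gg 1 = 1 := rfl
    rw [e, pow_one]
    exact X1_eval
  have h2 := B_eq 0
  have h3 : Eser 1 * qpInf⁻¹ = qpInf⁻¹ - 1 := by rw [← h2, h1]
  calc Eser 1 = Eser 1 * (qpInf⁻¹ * qpInf) := by rw [qpInf_inv_mul, mul_one]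
    _ = (Eser 1 * qpInf⁻¹) * qpInf := by ring
    _ = (qpInf⁻¹ - 1) * qpInf := by rw [h3]
    _ = qpInf⁻¹ * qpInf - qpInf := by ring
    _ = 1 - qpInf := by rw [qpInf_inv_mul]

/-! ### the theorem's sum -/

noncomputable def sT (m d : ℕ) : PowerSeries ℚ :=
  PowerSeries.X ^ ((d + 1) ^ 2 + m.choose 2) * (qp (2 * (d + 1)))⁻¹
    * (1 - PowerSeries.X ^ m) * (1 - PowerSeries.X ^ (d + 1))⁻¹
    * qbin (2 * (d + 1)) ((d + 1) + m)

noncomputable def tT (b e : ℕ) : PowerSeries ℚ :=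
  (X : PowerSeries ℚ) ^ (e * (e + 2*b + 2) + gg (b+1)) *
    ((1 - (X : PowerSeries ℚ) ^ (b+1)) * ((1 - (X : PowerSeries ℚ) ^ (e+b+1))⁻¹ *
      ((qp e)⁻¹ * (qp (e + 2*b + 2))⁻¹)))

noncomputable def rT (b e : ℕ) : PowerSeries ℚ :=
  (X : PowerSeries ℚ) ^ (e * (e + 2*b + 2) + gg (b+1) + (b+1)) *
    ((1 - (X : PowerSeries ℚ) ^ e) * ((1 - (X : PowerSeries ℚ) ^ (e+b+1))⁻¹ *
      ((qp e)⁻¹ * (qp (e + 2*b + 2))⁻¹)))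

lemma Ord1_tT (b : ℕ) : Ord1 (tT b) :=
  Ord1_of_exp (fun e => rfl) (fun e =>
    le_trans (le_self_mul_add e (2*b+2)) (Nat.le_add_right _ _))

lemma Ord1_rT (b : ℕ) : Ord1 (rT b) :=
  Ord1_of_exp (fun e => rfl) (fun e =>
    le_trans (le_self_mul_add e (2*b+2))
      (le_trans (Nat.le_add_right _ _) (Nat.le_add_right _ _)))

lemma Ord1_sT (m : ℕ) : Ord1 (sT m) := by
  intro d
  have hrw : sT m d = (X : PowerSeries ℚ) ^ ((d + 1) ^ 2 + m.choose 2) *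
      ((qp (2 * (d + 1)))⁻¹ * (1 - PowerSeries.X ^ m) * (1 - PowerSeries.X ^ (d + 1))⁻¹
        * qbin (2 * (d + 1)) ((d + 1) + m)) := by
    rw [sT]; ring
  rw [hrw]
  refine Dvd.dvd.mul_right (pow_dvd_pow _ ?_) _
  have h1 : d + 1 ≤ (d+1) * (d+1) := Nat.le_mul_of_pos_left _ (by omega)
  have h2 : (d+1)^2 = (d+1)*(d+1) := by ring
  omega

lemma sT_vanish {m d : ℕ} (h : d + 1 < m) : sT m d = 0 := by
  rw [sT, qbin_of_lt (by omega), mul_zero]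

lemma expoA (b e : ℕ) : (e + b + 1)^2 + (b+1).choose 2 = e*(e + 2*b + 2) + gg (b+1) := by
  have h1 := two_gg (b+1)
  have h2 := two_choose (b+1)
  have key : 2*((e + b + 1)^2 + (b+1).choose 2) + (b+1)
      = 2*(e*(e + 2*b + 2) + gg (b+1)) + (b+1) := by
    calc 2*((e + b + 1)^2 + (b+1).choose 2) + (b+1)
        = 2*(e+b+1)^2 + (2*(b+1).choose 2 + (b+1)) := by ring
      _ = 2*(e+b+1)^2 + (b+1)*(b+1) := by rw [h2]
      _ = 2*(e*(e+2*b+2)) + 3*((b+1)*(b+1)) := by ring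
      _ = 2*(e*(e+2*b+2)) + (2 * gg (b+1) + (b+1)) := by rw [h1]
      _ = 2*(e*(e + 2*b + 2) + gg (b+1)) + (b+1) := by ring
  omega

lemma sT_shift_eq (b e : ℕ) : sT (b+1) (e + b) = tT b e := by
  rw [sT, tT]
  have e1 : e + b + 1 + (b + 1) = e + 2*b + 2 + 0 := by omega
  have e2 : 2 * (e + b + 1) = (e + 2*b + 2) + e := by omega
  rw [e2]
  have e3 : e + b + 1 + (b+1) = e + 2*b + 2 := by omega
  rw [e3, qbin_eq]
  have expo := expoA b e
  rw [expo]
  -- RHS of qbin_eq : qp (e+2b+2+e) * ((qp (e+2b+2))⁻¹ * (qp e)⁻¹)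
  have hcancel := qp_inv_mul (e + 2*b + 2 + e)
  linear_combination ((X : PowerSeries ℚ) ^ (e*(e + 2*b + 2) + gg (b+1)) *
    ((1 - (X : PowerSeries ℚ) ^ (b+1)) * ((1 - (X : PowerSeries ℚ) ^ (e+b+1))⁻¹ *
      ((qp e)⁻¹ * (qp (e + 2*b + 2))⁻¹)))) * hcancel

lemma tT_plus_rT (b e : ℕ) :
    tT b e + rT b e = (X : PowerSeries ℚ) ^ (gg (b+1)) * uD (2*b+2) e := by
  rw [tT, rT, uD]
  have e1 : e + (2*b + 2) = e + 2*b + 2 := by omega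
  rw [e1]
  have hG := osx_mul_inv (e + b + 1) (by omega)
  linear_combination ((X : PowerSeries ℚ) ^ (e*(e + 2*b + 2) + gg (b+1)) *
    ((qp e)⁻¹ * (qp (e + 2*b + 2))⁻¹)) * hG

lemma rT_zero (b : ℕ) : rT b 0 = 0 := by
  rw [rT]
  simp

lemma rT_succ (b f : ℕ) :
    rT b (f + 1) = (X : PowerSeries ℚ) ^ (gg (b+2)) * xt (b+1) f := by
  rw [rT, xt]
  have e1 : f + 1 + b + 1 = f + (b+1) + 1 := by omega
  have e2 : f + 1 + 2*b + 2 = f + 2*(b+1) + 1 := by omega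
  rw [e1, e2]
  have expo : (f+1) * (f + 2*(b+1) + 1) + gg (b+1) + (b+1)
      = f * (f + 2*(b+1) + 2) + gg (b+2) := by
    rw [gg_succ (b+1)]
    have : (f+1) * (f + 2*(b+1) + 1) + (b+1) = f * (f + 2*(b+1) + 2) + (3*(b+1) + 1) := by ring
    omega
  rw [expo]
  have hq : (qp f)⁻¹ = (qp (f+1))⁻¹ * (1 - (X : PowerSeries ℚ) ^ (f+1)) := qp_inv_step f
  rw [hq]
  ring

lemma Ssum_eval (b : ℕ) :
    seriesSum (sT (b+1))
      = (X : PowerSeries ℚ) ^ (gg (b+1)) * qpInf⁻¹ - Eser (b+2) * qpInf⁻¹ := by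
  have s1 : seriesSum (sT (b+1)) = seriesSum (fun e => sT (b+1) (e + b)) :=
    seriesSum_shift_many b (Ord1_sT (b+1)) (fun d hd => sT_vanish (by omega))
  have s2 : seriesSum (fun e => sT (b+1) (e + b)) = seriesSum (tT b) :=
    congrArg seriesSum (funext fun e => sT_shift_eq b e)
  have s3 : ∀ e, tT b e = (X : PowerSeries ℚ) ^ (gg (b+1)) * uD (2*b+2) e - rT b e := by
    intro e
    have := tT_plus_rT b e
    linear_combination this
  have s4 : seriesSum (tT b)
      = seriesSum (fun e => (X : PowerSeries ℚ) ^ (gg (b+1)) * uD (2*b+2) e)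
        - seriesSum (rT b) := by
    rw [← seriesSum_sub]
    exact congrArg seriesSum (funext s3)
  have s5 : seriesSum (fun e => (X : PowerSeries ℚ) ^ (gg (b+1)) * uD (2*b+2) e)
      = (X : PowerSeries ℚ) ^ (gg (b+1)) * qpInf⁻¹ := by
    rw [← seriesSum_mul_left (Ord1_uD (2*b+2)), durfee]
  have s6 : seriesSum (rT b) = Eser (b+2) * qpInf⁻¹ := by
    have p1 : seriesSum (rT b) = rT b 0 + seriesSum (fun f => rT b (f+1)) :=
      seriesSum_peel (Ord1_rT b)
    have p2 : seriesSum (fun f => rT b (f+1))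
        = seriesSum (fun f => (X : PowerSeries ℚ) ^ (gg (b+2)) * xt (b+1) f) :=
      congrArg seriesSum (funext fun f => rT_succ b f)
    have p3 : seriesSum (fun f => (X : PowerSeries ℚ) ^ (gg (b+2)) * xt (b+1) f)
        = (X : PowerSeries ℚ) ^ (gg (b+2)) * seriesSum (xt (b+1)) :=
      (seriesSum_mul_left (Ord1_xt (b+1)) _).symm
    have p4 : (X : PowerSeries ℚ) ^ (gg (b+2)) * seriesSum (xt (b+1)) = Bb (b+1) := by
      rw [Bb]
    have p5 := B_eq (b+1)
    rw [p1, rT_zero, p2, p3, p4, p5, zero_add]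
  rw [s1, s2, s4, s5, s6]

lemma partial_pent : ∀ b : ℕ,
    (∑ l ∈ Finset.range (b+1),
        (-1 : PowerSeries ℚ) ^ l * PowerSeries.X ^ (gg l)
          * (1 - PowerSeries.X ^ (4 * l + 2)))
      = qpInf + (-1 : PowerSeries ℚ) ^ b * (X : PowerSeries ℚ) ^ (gg (b+1))
        - (-1 : PowerSeries ℚ) ^ b * Eser (b+2) := by
  intro b
  induction b with
  | zero =>
    rw [Finset.sum_range_one]
    have hE := Erec 1
    have hP := pentagonal_tail
    have e1 : gg 1 = 1 := rfl
    have e0 : gg 0 = 0 := rfl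
    rw [e1] at hE
    rw [e0]
    norm_num at hE ⊢
    rw [e1]
    linear_combination hE - hP
  | succ b ih =>
    rw [Finset.sum_range_succ, ih]
    have hE := Erec (b+2)
    have eg : gg (b+2) = gg (b+1) + (3*b + 4) := by
      rw [gg_succ (b+1)]; omega
    have ei1 : b + 1 + 1 = b + 2 := by omega
    have ei2 : b + 2 + 1 = b + 3 := by omega
    rw [ei2] at hE
    rw [ei1, eg] at hE ⊢
    linear_combination (-1 : PowerSeries ℚ) ^ (b+1) * hE


/-- For `m ≥ 1`:
`(1/(q;q)_∞) Σ_{l=0}^{m-1} (-1)^l q^{l(3l-1)/2}(1-q^{4l+2})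
  = 1 + (-1)^{m-1} Σ_{d=1}^∞ q^{d²+C(m,2)}/(q;q)_{2d} · (1-q^m)/(1-q^d) · qbinom(2d,d+m)`. -/
theorem stmt_10 (m : ℕ) (hm : 1 ≤ m) :
    qpInf⁻¹ * ∑ l ∈ Finset.range m,
        (-1 : PowerSeries ℚ) ^ l * PowerSeries.X ^ (l * (3 * l - 1) / 2)
          * (1 - PowerSeries.X ^ (4 * l + 2))
      = 1 + (-1 : PowerSeries ℚ) ^ (m - 1) *
          seriesSum (fun d =>
            PowerSeries.X ^ ((d + 1) ^ 2 + m.choose 2) * (qp (2 * (d + 1)))⁻¹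
              * (1 - PowerSeries.X ^ m) * (1 - PowerSeries.X ^ (d + 1))⁻¹
              * qbin (2 * (d + 1)) ((d + 1) + m)) := by
  obtain ⟨b, rfl⟩ : ∃ b, m = b + 1 := ⟨m - 1, by omega⟩
  have hsum : (∑ l ∈ Finset.range (b+1),
        (-1 : PowerSeries ℚ) ^ l * PowerSeries.X ^ (l * (3 * l - 1) / 2)
          * (1 - PowerSeries.X ^ (4 * l + 2)))
      = ∑ l ∈ Finset.range (b+1),
        (-1 : PowerSeries ℚ) ^ l * PowerSeries.X ^ (gg l)
          * (1 - PowerSeries.X ^ (4 * l + 2)) :=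
    Finset.sum_congr rfl fun l _ => by rw [gg_formula]
  rw [hsum, partial_pent b]
  have hidx : b + 1 - 1 = b := by omega
  rw [hidx]
  have hfun : (fun d =>
      PowerSeries.X ^ ((d + 1) ^ 2 + (b+1).choose 2) * (qp (2 * (d + 1)))⁻¹
        * (1 - PowerSeries.X ^ (b+1)) * (1 - PowerSeries.X ^ (d + 1))⁻¹
        * qbin (2 * (d + 1)) ((d + 1) + (b+1))) = sT (b+1) := rfl
  rw [hfun]
  have hS := Ssum_eval b
  have hinv := qpInf_inv_mul
  linear_combination hinv - (-1 : PowerSeries ℚ) ^ b * hS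
end

section
/- For d ≥ 1, the generating function Σ_n a⁻(n;d) q^n for the number a⁻(n;d) of partitions of n whose Frobenius symbol has exactly d columns and whose last column is negative equals q^{d²} / ((q;q)_d² (1+q^d)). -/
open Finset
open scoped Classical

/-- `p` (a pair of functions `Fin d → ℕ`, the top and bottom rows) is a Frobenius
symbol of a partition of `n` with exactly `d` columns: both rows are strictly
decreasing and `Σ (xᵢ + yᵢ + 1) = n`. -/
def IsFrob (d n : ℕ) (p : (Fin d → ℕ) × (Fin d → ℕ)) : Prop :=
  StrictAnti p.1 ∧ StrictAnti p.2 ∧ (∑ i, (p.1 i + p.2 i + 1)) = n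

/-- Column `i` of the Frobenius symbol is positive, i.e. `xᵢ - yᵢ ≥ 1`. -/
def ColPos (d : ℕ) (p : (Fin d → ℕ) × (Fin d → ℕ)) (i : Fin d) : Prop :=
  p.2 i < p.1 i

/-- The number of parity changes between consecutive columns; the number of parity
blocks is this quantity plus one (for `d ≥ 1`). -/
noncomputable def numChanges (d : ℕ) (p : (Fin d → ℕ) × (Fin d → ℕ)) : ℕ :=
  (Finset.univ.filter fun i : Fin d =>
    ∃ h : (i : ℕ) + 1 < d, ¬ (ColPos d p i ↔ ColPos d p ⟨(i : ℕ) + 1, h⟩)).card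

/-- The last column (hence the last parity block) is positive. -/
def LastPos (d : ℕ) (p : (Fin d → ℕ) × (Fin d → ℕ)) : Prop :=
  ∀ h : d - 1 < d, ColPos d p ⟨d - 1, h⟩

/-- The last column (hence the last parity block) is negative. -/
def LastNeg (d : ℕ) (p : (Fin d → ℕ) × (Fin d → ℕ)) : Prop :=
  ∀ h : d - 1 < d, ¬ ColPos d p ⟨d - 1, h⟩


/-- weighted sum -/
def wt {d : ℕ} (c : Fin d → ℕ) : ℕ := ∑ i : Fin d, (i.val + 1) * c i

lemma wt_le {d : ℕ} {c : Fin d → ℕ} (i : Fin d) : c i ≤ wt c := by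
  unfold wt
  calc c i ≤ (i.val+1) * c i := Nat.le_mul_of_pos_left _ (Nat.succ_pos _)
  _ ≤ _ := Finset.single_le_sum (f := fun j : Fin d => (j.val+1) * c j)
      (fun j _ => Nat.zero_le _) (Finset.mem_univ i)

instance finite_wt (d m : ℕ) : Finite {c : Fin d → ℕ // wt c = m} := by
  apply Finite.of_injective (fun c => (fun i => (⟨c.1 i, by
    have h1 := wt_le (c := c.1) i; have h2 := c.2; omega
    ⟩ : Fin (m+1)) : Fin d → Fin (m+1)))
  intro a b h
  ext i
  exact congrArg Fin.val (congrFun h i)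

noncomputable def Sc (d m : ℕ) : ℕ := Nat.card {c : Fin d → ℕ // wt c = m}

lemma Sc_zero (m : ℕ) : Sc 0 m = if m = 0 then 1 else 0 := by
  unfold Sc
  split
  · subst m
    rw [Nat.card_eq_one_iff_unique]
    constructor
    · constructor
      intro a b; ext i; exact absurd i.2 (by omega)
    · exact ⟨⟨fun i => 0, by simp [wt]⟩⟩
  · rw [Nat.card_eq_zero]
    left
    constructor
    intro c
    have := c.2
    simp [wt] at this
    omega

lemma wt_eq {k : ℕ} (c : Fin (k+1) → ℕ) :
    wt c = wt (Fin.init c) + (k+1) * c (Fin.last k) := by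
  unfold wt
  rw [Fin.sum_univ_castSucc]
  simp [Fin.init]

lemma init_update_last {k : ℕ} (c : Fin (k+1) → ℕ) (v : ℕ) :
    Fin.init (Function.update c (Fin.last k) v) = Fin.init c := by
  funext i
  simp [Fin.init, Function.update, (Fin.castSucc_lt_last i).ne]

lemma card_split {α : Type*} [Finite α] (q : α → Prop) :
    Nat.card α = Nat.card {a // q a} + Nat.card {a // ¬ q a} := by
  rw [← Nat.card_sum]
  exact Nat.card_congr (Equiv.sumCompl q).symm

lemma Sc_succ (k n : ℕ) :
    Sc (k+1) n = Sc k n + (if k+1 ≤ n then Sc (k+1) (n - (k+1)) else 0) := by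
  unfold Sc
  rw [card_split (fun c : {c : Fin (k+1) → ℕ // wt c = n} => c.1 (Fin.last k) = 0)]
  congr 1
  · -- zero part ≃ Fin k
    apply Nat.card_congr
    refine (Equiv.subtypeSubtypeEquivSubtypeInter (fun c : Fin (k+1) → ℕ => wt c = n)
      (fun c => c (Fin.last k) = 0)).trans ?_
    refine ⟨fun c => ⟨Fin.init c.1, ?_⟩, fun b => ⟨Fin.snoc b.1 0, ?_⟩, ?_, ?_⟩
    · obtain ⟨c, hc, h0⟩ := c
      show wt (Fin.init c) = n
      have h := wt_eq c
      simp only [h0, Nat.mul_zero, Nat.add_zero] at h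
      omega
    · constructor
      · rw [wt_eq, Fin.init_snoc, Fin.snoc_last, Nat.mul_zero, Nat.add_zero, b.2]
      · simp
    · intro c
      apply Subtype.ext
      have h0 : c.1 (Fin.last k) = 0 := c.2.2
      have h := Fin.snoc_init_self c.1
      rw [h0] at h
      exact h
    · intro b
      apply Subtype.ext
      simp
  · -- nonzero part ≃ shift
    rw [Nat.card_congr (Equiv.subtypeSubtypeEquivSubtypeInter
      (fun c : Fin (k+1) → ℕ => wt c = n) (fun c => ¬ c (Fin.last k) = 0))]
    have e2 : {c : Fin (k+1) → ℕ // wt c = n ∧ ¬ c (Fin.last k) = 0} ≃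
        {c : Fin (k+1) → ℕ // wt c + (k+1) = n} := by
      refine ⟨fun c => ⟨Function.update c.1 (Fin.last k) (c.1 (Fin.last k) - 1), ?_⟩,
        fun b => ⟨Function.update b.1 (Fin.last k) (b.1 (Fin.last k) + 1), ?_⟩, ?_, ?_⟩
      · obtain ⟨c, hc, h0⟩ := c
        rw [wt_eq, init_update_last, Function.update_self]
        have h1 : (k+1) * (c (Fin.last k) - 1) + (k+1) = (k+1) * c (Fin.last k) := by
          have h2 : c (Fin.last k) - 1 + 1 = c (Fin.last k) := by omega
          rw [← h2, Nat.mul_add, Nat.mul_one, h2]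
        rw [add_assoc, h1, ← wt_eq, hc]
      · obtain ⟨b, hb⟩ := b
        constructor
        · rw [wt_eq, init_update_last, Function.update_self, Nat.mul_add, Nat.mul_one,
            ← add_assoc, ← wt_eq, hb]
        · simp
      · intro c
        apply Subtype.ext
        simp only [Function.update_idem, Function.update_self]
        have h0 : c.1 (Fin.last k) ≠ 0 := c.2.2
        have : c.1 (Fin.last k) - 1 + 1 = c.1 (Fin.last k) := by omega
        rw [this, Function.update_eq_self]
      · intro b
        apply Subtype.ext
        simp only [Function.update_idem, Function.update_self, Nat.add_sub_cancel,
          Function.update_eq_self]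
    rw [Nat.card_congr e2]
    split
    · exact Nat.card_congr (Equiv.subtypeEquivRight (fun c => by omega))
    · rw [Nat.card_eq_zero]
      left
      exact ⟨fun c => by have := c.2; omega⟩

noncomputable def G (k : ℕ) : PowerSeries ℚ := PowerSeries.mk fun n => (Sc k n : ℚ)

lemma G_step (k : ℕ) : G (k+1) * (1 - PowerSeries.X ^ (k+1)) = G k := by
  ext n
  rw [mul_sub, mul_one, map_sub, PowerSeries.coeff_mul_X_pow']
  simp only [G, PowerSeries.coeff_mk]
  rw [Sc_succ k n]
  push_cast
  split <;> simp

lemma G_qp (k : ℕ) : G k * qp k = 1 := by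
  induction k with
  | zero =>
    have h1 : qp 0 = 1 := by simp [qp]
    have h2 : G 0 = 1 := by
      ext n
      simp [G, Sc_zero, PowerSeries.coeff_one]

    rw [h1, h2, mul_one]
  | succ k ih =>
    have h1 : qp (k+1) = qp k * (1 - PowerSeries.X ^ (k+1)) := by
      rw [qp, Finset.prod_range_succ]; rfl
    calc G (k+1) * qp (k+1) = (G (k+1) * (1 - PowerSeries.X ^ (k+1))) * qp k := by
          rw [h1]; ring
      _ = G k * qp k := by rw [G_step]
      _ = 1 := ih

noncomputable def T2 (d m : ℕ) : ℕ :=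
  Nat.card {bc : (Fin d → ℕ) × (Fin d → ℕ) // wt bc.1 + wt bc.2 = m}

instance finite_T2 (d m : ℕ) :
    Finite {bc : (Fin d → ℕ) × (Fin d → ℕ) // wt bc.1 + wt bc.2 = m} := by
  have key : ∀ (bc : {bc : (Fin d → ℕ) × (Fin d → ℕ) // wt bc.1 + wt bc.2 = m}) (i : Fin d),
      bc.1.1 i < m + 1 ∧ bc.1.2 i < m + 1 := by
    intro bc i
    have h1 := wt_le (c := bc.1.1) i
    have h2 := wt_le (c := bc.1.2) i
    have h3 := bc.2
    omega
  apply Finite.of_injective (fun bc =>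
    ((fun i => (⟨bc.1.1 i, (key bc i).1⟩ : Fin (m+1))),
     (fun i => (⟨bc.1.2 i, (key bc i).2⟩ : Fin (m+1)))))
  intro a b h
  obtain ⟨h1, h2⟩ := Prod.mk.injEq .. ▸ h
  apply Subtype.ext
  apply Prod.ext
  · ext i; exact congrArg Fin.val (congrFun h1 i)
  · ext i; exact congrArg Fin.val (congrFun h2 i)

lemma T2_eq (d n : ℕ) : T2 d n = ∑ p ∈ antidiagonal n, Sc d p.1 * Sc d p.2 := by
  haveI : ∀ m : ℕ, Fintype {c : Fin d → ℕ // wt c = m} := fun m => Fintype.ofFinite _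
  haveI : Fintype {bc : (Fin d → ℕ) × (Fin d → ℕ) // wt bc.1 + wt bc.2 = n} :=
    Fintype.ofFinite _
  have e : {bc : (Fin d → ℕ) × (Fin d → ℕ) // wt bc.1 + wt bc.2 = n} ≃
      Σ p : (antidiagonal n : Finset (ℕ × ℕ)),
        ({c : Fin d → ℕ // wt c = (p : ℕ × ℕ).1} × {c : Fin d → ℕ // wt c = (p : ℕ × ℕ).2}) := by
    refine ⟨fun bc => ⟨⟨(wt bc.1.1, wt bc.1.2), by
        rw [Finset.HasAntidiagonal.mem_antidiagonal]; exact bc.2⟩, ⟨bc.1.1, rfl⟩, ⟨bc.1.2, rfl⟩⟩,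
      fun s => ⟨(s.2.1.1, s.2.2.1), by
        have hp := s.1.2
        rw [Finset.HasAntidiagonal.mem_antidiagonal] at hp
        rw [s.2.1.2, s.2.2.2]; exact hp⟩, fun bc => rfl, ?_⟩
    rintro ⟨⟨p, hp⟩, ⟨x, hx⟩, ⟨y, hy⟩⟩
    obtain ⟨a, b⟩ := p
    dsimp at hx hy ⊢
    subst hx; subst hy
    rfl
  rw [T2, Nat.card_congr e, Nat.card_eq_fintype_card, Fintype.card_sigma]
  rw [← Finset.sum_coe_sort (antidiagonal n)]
  congr 1
  funext p
  rw [Fintype.card_prod, Sc, Sc, Nat.card_eq_fintype_card, Nat.card_eq_fintype_card]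

lemma T2_gf (d : ℕ) : PowerSeries.mk (fun n => (T2 d n : ℚ)) = G d * G d := by
  ext n
  rw [PowerSeries.coeff_mk, PowerSeries.coeff_mul, T2_eq]
  push_cast
  refine Finset.sum_congr rfl fun p _ => ?_
  simp [G]

def psi {d : ℕ} (b : Fin d → ℕ) : Fin d → ℕ :=
  fun i => (∑ j ∈ Finset.Ici i, b j) + (d - 1 - i.val)

def phi {d : ℕ} (x : Fin d → ℕ) : Fin d → ℕ := fun j =>
  if h : j.val + 1 < d then x j - (x ⟨j.val + 1, h⟩ + 1) else x j

lemma Ici_split {d : ℕ} (j : Fin d) (h : j.val + 1 < d) :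
    Finset.Ici j = insert j (Finset.Ici (⟨j.val + 1, h⟩ : Fin d)) := by
  ext m
  simp only [Finset.mem_Ici, Finset.mem_insert, Fin.le_def, Fin.ext_iff]
  omega

lemma not_mem_Ici_succ {d : ℕ} (j : Fin d) (h : j.val + 1 < d) :
    j ∉ Finset.Ici (⟨j.val + 1, h⟩ : Fin d) := by
  simp [Finset.mem_Ici, Fin.le_def]

lemma sum_Ici_split {d : ℕ} (b : Fin d → ℕ) (j : Fin d) (h : j.val + 1 < d) :
    ∑ m ∈ Finset.Ici j, b m = b j + ∑ m ∈ Finset.Ici (⟨j.val + 1, h⟩ : Fin d), b m := by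
  rw [Ici_split j h, Finset.sum_insert (not_mem_Ici_succ j h)]

lemma Ici_last {d : ℕ} (j : Fin d) (h : ¬ j.val + 1 < d) : Finset.Ici j = {j} := by
  ext m
  have := m.isLt
  have := j.isLt
  simp only [Finset.mem_Ici, Finset.mem_singleton, Fin.le_def, Fin.ext_iff]
  omega

lemma psi_strictAnti {d : ℕ} (b : Fin d → ℕ) : StrictAnti (psi b) := by
  intro i j hij
  have h1 : ∑ m ∈ Finset.Ici j, b m ≤ ∑ m ∈ Finset.Ici i, b m :=
    Finset.sum_le_sum_of_subset (Finset.Ici_subset_Ici.mpr hij.le)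
  have h2 : d - 1 - j.val < d - 1 - i.val := by
    have := j.isLt
    have hlt : i.val < j.val := hij
    omega
  exact add_lt_add_of_le_of_lt h1 h2

lemma sum_psi {d : ℕ} (b : Fin d → ℕ) :
    ∑ i, psi b i = wt b + ∑ i : Fin d, i.val := by
  unfold psi
  rw [Finset.sum_add_distrib]
  congr 1
  · -- double sum swap
    have h1 : ∀ i : Fin d, ∑ j ∈ Finset.Ici i, b j = ∑ j : Fin d, if i ≤ j then b j else 0 := by
      intro i
      rw [← Finset.sum_filter]
      congr 1
      ext m
      simp [Finset.mem_Ici, Finset.mem_filter]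
    calc ∑ i : Fin d, ∑ j ∈ Finset.Ici i, b j
        = ∑ i : Fin d, ∑ j : Fin d, if i ≤ j then b j else 0 := by
          exact Finset.sum_congr rfl fun i _ => h1 i
      _ = ∑ j : Fin d, ∑ i : Fin d, if i ≤ j then b j else 0 := Finset.sum_comm
      _ = ∑ j : Fin d, (j.val + 1) * b j := by
          refine Finset.sum_congr rfl fun j _ => ?_
          rw [← Finset.sum_filter, Finset.sum_const]
          have : Finset.filter (fun i => i ≤ j) Finset.univ = Finset.Iic j := by
            ext m; simp
          rw [this, Fin.card_Iic, smul_eq_mul]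
      _ = wt b := rfl
  · -- staircase sum
    rw [Fin.sum_univ_eq_sum_range (fun i => d - 1 - i), Fin.sum_univ_eq_sum_range (fun i => i)]
    rw [← Finset.sum_range_reflect]
    refine Finset.sum_congr rfl fun i hi => ?_
    rw [Finset.mem_range] at hi
    omega

lemma phi_psi {d : ℕ} (b : Fin d → ℕ) : phi (psi b) = b := by
  funext j
  unfold phi
  split
  · next h =>
    rw [show (psi b) j = ∑ m ∈ Finset.Ici j, b m + (d - 1 - j.val) from rfl,
      sum_Ici_split b j h]
    rw [show (psi b) ⟨j.val+1, h⟩ = ∑ m ∈ Finset.Ici (⟨j.val+1, h⟩ : Fin d), b m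
      + (d - 1 - (j.val+1)) from rfl]
    have := j.isLt
    omega
  · next h =>
    rw [show (psi b) j = ∑ m ∈ Finset.Ici j, b m + (d - 1 - j.val) from rfl]
    rw [Ici_last j h, Finset.sum_singleton]
    have := j.isLt
    omega

lemma psi_phi {d : ℕ} (x : Fin d → ℕ) (hx : StrictAnti x) : psi (phi x) = x := by
  have key : ∀ (n : ℕ) (i : Fin d), d - 1 - i.val = n →
      x i = (∑ j ∈ Finset.Ici i, phi x j) + (d - 1 - i.val) := by
    intro n
    induction n using Nat.strong_induction_on with
    | _ n IH =>
      intro i hn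
      by_cases h : i.val + 1 < d
      · have hIH := IH (d - 1 - (i.val + 1)) (by have := i.isLt; omega) ⟨i.val+1, h⟩ rfl
        have hlt : x ⟨i.val+1, h⟩ < x i := hx (by simp [Fin.lt_def])
        rw [sum_Ici_split (phi x) i h]
        have hphi : phi x i = x i - (x ⟨i.val+1, h⟩ + 1) := by simp [phi, h]
        rw [hphi]
        have hIH' : x ⟨i.val+1, h⟩ =
            (∑ m ∈ Finset.Ici (⟨i.val+1, h⟩ : Fin d), phi x m) + (d - 1 - (i.val+1)) := hIH
        have := i.isLt
        omega
      · rw [Ici_last i h, Finset.sum_singleton]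
        have hphi : phi x i = x i := by simp [phi, h]
        have := i.isLt
        omega
  funext i
  rw [show psi (phi x) i = ∑ j ∈ Finset.Ici i, phi x j + (d - 1 - i.val) from rfl]
  exact (key _ i rfl).symm

lemma gauss (d : ℕ) : 2 * (∑ i : Fin d, i.val) + d = d ^ 2 := by
  rw [Fin.sum_univ_eq_sum_range (fun i => i)]
  induction d with
  | zero => simp
  | succ k ih =>
    rw [Finset.sum_range_succ]
    ring_nf
    ring_nf at ih
    omega

/-- The Frobenius count equiv. -/
def frobEquiv (d n : ℕ) :
    {p : (Fin d → ℕ) × (Fin d → ℕ) // IsFrob d n p} ≃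
    {bc : (Fin d → ℕ) × (Fin d → ℕ) // wt bc.1 + wt bc.2 + d ^ 2 = n} := by
  have hsum : ∀ (x y : Fin d → ℕ), (∑ i, (x i + y i + 1)) = ∑ i, x i + ∑ i, y i + d := by
    intro x y
    rw [Finset.sum_add_distrib, Finset.sum_add_distrib, Finset.sum_const, Finset.card_univ,
      Fintype.card_fin, smul_eq_mul, mul_one]
  refine ⟨fun p => ⟨(phi p.1.1, phi p.1.2), ?_⟩, fun bc => ⟨(psi bc.1.1, psi bc.1.2), ?_⟩, ?_, ?_⟩
  · obtain ⟨⟨x, y⟩, hx, hy, hn⟩ := p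
    dsimp only at hn ⊢
    rw [hsum] at hn
    have h1 : ∑ i, x i = wt (phi x) + ∑ i : Fin d, i.val := by
      conv_lhs => rw [← psi_phi x hx]
      exact sum_psi (phi x)
    have h2 : ∑ i, y i = wt (phi y) + ∑ i : Fin d, i.val := by
      conv_lhs => rw [← psi_phi y hy]
      exact sum_psi (phi y)
    have h3 := gauss d
    omega
  · obtain ⟨⟨b, c⟩, hbc⟩ := bc
    have hbc' : wt b + wt c + d ^ 2 = n := hbc
    refine ⟨psi_strictAnti b, psi_strictAnti c, ?_⟩
    show (∑ i, (psi b i + psi c i + 1)) = n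
    rw [hsum, sum_psi, sum_psi]
    have h3 := gauss d
    omega
  · intro p
    apply Subtype.ext
    obtain ⟨⟨x, y⟩, hx, hy, hn⟩ := p
    simp only
    rw [psi_phi x hx, psi_phi y hy]
  · intro bc
    apply Subtype.ext
    simp only
    rw [phi_psi, phi_psi]

lemma frob_sum_eq {d n : ℕ} {p : (Fin d → ℕ) × (Fin d → ℕ)} (hp : IsFrob d n p) :
    ∑ i, p.1 i + ∑ i, p.2 i + d = n := by
  have := hp.2.2
  rw [Finset.sum_add_distrib, Finset.sum_add_distrib, Finset.sum_const, Finset.card_univ,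
    Fintype.card_fin, smul_eq_mul, mul_one] at this
  exact this

lemma frob_le {d n : ℕ} {p : (Fin d → ℕ) × (Fin d → ℕ)} (hp : IsFrob d n p) : d ≤ n := by
  have := frob_sum_eq hp
  omega

lemma frob_bound {d n : ℕ} {p : (Fin d → ℕ) × (Fin d → ℕ)} (hp : IsFrob d n p) (i : Fin d) :
    p.1 i < n + 1 ∧ p.2 i < n + 1 := by
  have h1 : p.1 i + p.2 i + 1 ≤ ∑ j, (p.1 j + p.2 j + 1) :=
    Finset.single_le_sum (f := fun j => p.1 j + p.2 j + 1) (fun j _ => Nat.zero_le _)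
      (Finset.mem_univ i)
  rw [hp.2.2] at h1
  omega

lemma finite_frob_sub (d n : ℕ) (P : (Fin d → ℕ) × (Fin d → ℕ) → Prop)
    (h : ∀ p, P p → IsFrob d n p) : Finite {p // P p} := by
  apply Finite.of_injective (fun p =>
    ((fun i => (⟨p.1.1 i, (frob_bound (h p.1 p.2) i).1⟩ : Fin (n+1))),
     (fun i => (⟨p.1.2 i, (frob_bound (h p.1 p.2) i).2⟩ : Fin (n+1)))))
  intro a b hab
  obtain ⟨h1, h2⟩ := Prod.mk.injEq .. ▸ hab
  apply Subtype.ext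
  apply Prod.ext
  · ext i; exact congrArg Fin.val (congrFun h1 i)
  · ext i; exact congrArg Fin.val (congrFun h2 i)

lemma not_lastNeg_iff {d : ℕ} (hd : 1 ≤ d) (p : (Fin d → ℕ) × (Fin d → ℕ)) :
    ¬ LastNeg d p ↔ LastPos d p := by
  have hw : d - 1 < d := by omega
  unfold LastNeg LastPos
  constructor
  · intro h h'
    by_contra hc
    exact h (fun _ => hc)
  · intro h hneg
    exact hneg hw (h hw)

/-- The shift bijection. -/
def negShift (d n : ℕ) (hd : 1 ≤ d) (hn : d ≤ n) :
    {p : (Fin d → ℕ) × (Fin d → ℕ) // IsFrob d n p ∧ LastPos d p} ≃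
    {p : (Fin d → ℕ) × (Fin d → ℕ) // IsFrob d (n - d) p ∧ LastNeg d p} := by
  have hw : d - 1 < d := by omega
  refine ⟨fun p => ⟨(p.1.2, fun i => p.1.1 i - 1), ?_⟩,
    fun q => ⟨(fun i => q.1.2 i + 1, q.1.1), ?_⟩, ?_, ?_⟩
  · obtain ⟨⟨x, y⟩, ⟨hx, hy, hsum⟩, hlp⟩ := p
    have hpos : ∀ i, 1 ≤ x i := by
      intro i
      have h1 : y ⟨d-1, hw⟩ < x ⟨d-1, hw⟩ := hlp hw
      have h2 : x ⟨d-1, hw⟩ ≤ x i := by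
        apply hx.antitone
        rw [Fin.le_def]
        have := i.isLt
        simp
        omega
      omega
    refine ⟨⟨hy, ?_, ?_⟩, ?_⟩
    · intro i j hij
      have h1 : x j < x i := hx hij
      have h2 := hpos j
      show x j - 1 < x i - 1
      omega
    · have he : ∀ i : Fin d, y i + (x i - 1) + 1 = x i + y i := by
        intro i; have := hpos i; omega
      have hs : ∑ i, (y i + (x i - 1) + 1) = ∑ i, (x i + y i) := by
        exact Finset.sum_congr rfl fun i _ => he i
      have h3 := frob_sum_eq (⟨hx, hy, hsum⟩ : IsFrob d n (x, y))
      simp only at h3 ⊢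
      rw [hs, Finset.sum_add_distrib]
      omega
    · intro h
      simp only [ColPos, not_lt]
      have h1 : y ⟨d-1, hw⟩ < x ⟨d-1, hw⟩ := hlp hw
      omega
  · obtain ⟨⟨a, b⟩, ⟨ha, hb, hsum⟩, hln⟩ := q
    refine ⟨⟨?_, ha, ?_⟩, ?_⟩
    · intro i j hij
      have h1 : b j < b i := hb hij
      show b j + 1 < b i + 1
      omega
    · have h3 := frob_sum_eq (⟨ha, hb, hsum⟩ : IsFrob d (n - d) (a, b))
      have he : ∀ i : Fin d, (b i + 1) + a i + 1 = (a i + b i + 1) + 1 := fun i => by omega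
      simp only
      rw [Finset.sum_congr rfl fun i _ => he i, Finset.sum_add_distrib, Finset.sum_const,
        Finset.card_univ, Fintype.card_fin, smul_eq_mul, mul_one, hsum]
      omega
    · intro h
      simp only [ColPos]
      have h1 : ¬ b ⟨d-1, hw⟩ < a ⟨d-1, hw⟩ := hln hw
      omega
  · intro p
    apply Subtype.ext
    obtain ⟨⟨x, y⟩, ⟨hx, hy, hsum⟩, hlp⟩ := p
    have hpos : ∀ i, 1 ≤ x i := by
      intro i
      have h1 : y ⟨d-1, hw⟩ < x ⟨d-1, hw⟩ := hlp hw
      have h2 : x ⟨d-1, hw⟩ ≤ x i := by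
        apply hx.antitone
        rw [Fin.le_def]
        have := i.isLt
        simp
        omega
      omega
    refine Prod.ext (funext fun i => ?_) rfl
    have := hpos i
    show x i - 1 + 1 = x i
    omega
  · intro q
    apply Subtype.ext
    refine Prod.ext rfl (funext fun i => ?_)
    show q.1.2 i + 1 - 1 = q.1.2 i
    omega

noncomputable def TF (d n : ℕ) : ℕ :=
  Nat.card {p : (Fin d → ℕ) × (Fin d → ℕ) // IsFrob d n p}
noncomputable def Aneg (d n : ℕ) : ℕ :=
  Nat.card {p : (Fin d → ℕ) × (Fin d → ℕ) // IsFrob d n p ∧ LastNeg d p}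

lemma TF_split {d : ℕ} (hd : 1 ≤ d) (n : ℕ) :
    TF d n = Aneg d n + (if d ≤ n then Aneg d (n - d) else 0) := by
  haveI : Finite {p : (Fin d → ℕ) × (Fin d → ℕ) // IsFrob d n p} :=
    finite_frob_sub d n _ (fun p h => h)
  rw [TF, card_split (fun p : {p // IsFrob d n p} => LastNeg d p.1)]
  congr 1
  · rw [Nat.card_congr (Equiv.subtypeSubtypeEquivSubtypeInter
      (fun p => IsFrob d n p) (fun p => LastNeg d p))]
    rfl
  · rw [Nat.card_congr (Equiv.subtypeSubtypeEquivSubtypeInter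
      (fun p => IsFrob d n p) (fun p => ¬ LastNeg d p))]
    rw [Nat.card_congr (Equiv.subtypeEquivRight
      (fun p => and_congr_right fun hp => not_lastNeg_iff hd p))]
    by_cases hn : d ≤ n
    · rw [if_pos hn, Nat.card_congr (negShift d n hd hn)]
      rfl
    · rw [if_neg hn, Nat.card_eq_zero]
      left
      exact ⟨fun p => hn (frob_le p.2.1)⟩

lemma TF_gf (d : ℕ) :
    PowerSeries.mk (fun n => (TF d n : ℚ)) =
      PowerSeries.X ^ (d ^ 2) * PowerSeries.mk (fun n => (T2 d n : ℚ)) := by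
  ext n
  rw [PowerSeries.coeff_mk, PowerSeries.coeff_X_pow_mul']
  have h : TF d n = if d ^ 2 ≤ n then T2 d (n - d ^ 2) else 0 := by
    rw [TF, Nat.card_congr (frobEquiv d n)]
    split
    · next h =>
      rw [T2]
      exact Nat.card_congr (Equiv.subtypeEquivRight (fun bc => by omega))
    · next h =>
      rw [Nat.card_eq_zero]
      left
      exact ⟨fun bc => h (by have := bc.2; omega)⟩
  rw [h]
  split <;> simp


/-- `Σ_n a⁻(n;d) qⁿ = q^{d²}/((q;q)_d² (1+q^d))`, where `a⁻(n;d)` is the number of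
partitions of `n` whose Frobenius symbol has exactly `d` columns, the last of which
is negative. -/
theorem stmt_11 (d : ℕ) (hd : 1 ≤ d) :
    (PowerSeries.mk fun n =>
      ((Nat.card {p : (Fin d → ℕ) × (Fin d → ℕ) //
        IsFrob d n p ∧ LastNeg d p} : ℕ) : ℚ))
    = PowerSeries.X ^ (d ^ 2) * ((qp d) ^ 2 * (1 + PowerSeries.X ^ d))⁻¹ := by
  set F : PowerSeries ℚ := PowerSeries.mk fun n => (Aneg d n : ℚ) with hF
  have hFeq : (PowerSeries.mk fun n =>
      ((Nat.card {p : (Fin d → ℕ) × (Fin d → ℕ) //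
        IsFrob d n p ∧ LastNeg d p} : ℕ) : ℚ)) = F := rfl
  rw [hFeq]
  set U : PowerSeries ℚ := (qp d) ^ 2 * (1 + PowerSeries.X ^ d) with hU
  have h1 : F * (1 + PowerSeries.X ^ d) = PowerSeries.mk (fun n => (TF d n : ℚ)) := by
    ext n
    rw [mul_add, mul_one, map_add, PowerSeries.coeff_mul_X_pow']
    simp only [hF, PowerSeries.coeff_mk]
    rw [TF_split hd n]
    push_cast
    split <;> simp
  have hFU : F * U = PowerSeries.X ^ (d ^ 2) := by
    calc F * U = (F * (1 + PowerSeries.X ^ d)) * (qp d * qp d) := by rw [hU]; ring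
    _ = (PowerSeries.X ^ (d ^ 2) * (G d * G d)) * (qp d * qp d) := by
        rw [h1, TF_gf, T2_gf]
    _ = PowerSeries.X ^ (d ^ 2) * ((G d * qp d) * (G d * qp d)) := by ring
    _ = PowerSeries.X ^ (d ^ 2) := by rw [G_qp]; ring
  have hc : PowerSeries.constantCoeff U ≠ 0 := by
    have hqp : PowerSeries.constantCoeff (qp d) = 1 := by
      rw [qp, map_prod]
      apply Finset.prod_eq_one
      intro i _
      rw [map_sub, map_one, map_pow, PowerSeries.constantCoeff_X, zero_pow (by omega), sub_zero]
    rw [hU, map_mul, map_pow, hqp, map_add, map_one, map_pow, PowerSeries.constantCoeff_X,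
      zero_pow (by omega), add_zero]
    norm_num
  have hinv : U * U⁻¹ = 1 := PowerSeries.mul_inv_cancel _ hc
  calc F = F * (U * U⁻¹) := by rw [hinv, mul_one]
  _ = (F * U) * U⁻¹ := by ring
  _ = PowerSeries.X ^ (d ^ 2) * U⁻¹ := by rw [hFU]
end

section
/- For d ≥ 1, the generating function Σ_n a⁺(n;d) q^n for the number a⁺(n;d) of partitions of n whose Frobenius symbol has exactly d columns and whose last column is positive equals q^{d²+d} / ((q;q)_d² (1+q^d)). -/
open Finset
open scoped Classical

namespace FrobAux

/-! ### One-row counting -/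

/-- number of strictly decreasing rows of length `d` with sum `n` -/
noncomputable def G (d n : ℕ) : ℕ :=
  Nat.card {x : Fin d → ℕ // StrictAnti x ∧ ∑ i, x i = n}

lemma le_of_sum_eq {d n : ℕ} {x : Fin d → ℕ} (hx : ∑ i, x i = n) (i : Fin d) : x i ≤ n := by
  subst hx
  exact Finset.single_le_sum (fun j _ => Nat.zero_le _) (Finset.mem_univ i)

instance rowFinite (d n : ℕ) : Finite {x : Fin d → ℕ // StrictAnti x ∧ ∑ i, x i = n} := by
  apply Finite.of_injective
    (fun x => (fun i => (⟨x.1 i, Nat.lt_succ_of_le (le_of_sum_eq x.2.2 i)⟩ : Fin (n+1)))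
      : _ → (Fin d → Fin (n+1)))
  intro a b h
  ext i
  have := congrFun h i
  simpa [Fin.mk.injEq] using this

lemma card_split {α : Type*} (p q : α → Prop) [Finite {x // p x}] :
    Nat.card {x // p x} = Nat.card {x // p x ∧ q x} + Nat.card {x // p x ∧ ¬ q x} := by
  calc Nat.card {x // p x}
      = Nat.card ({y : {x // p x} // q y.1} ⊕ {y : {x // p x} // ¬ q y.1}) :=
        (Nat.card_congr (Equiv.sumCompl _)).symm
    _ = _ := by
        rw [Nat.card_sum,
          Nat.card_congr (Equiv.subtypeSubtypeEquivSubtypeInter p q),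
          Nat.card_congr (Equiv.subtypeSubtypeEquivSubtypeInter p (fun x => ¬ q x))]

lemma G_zero (n : ℕ) : G 0 n = if n = 0 then 1 else 0 := by
  unfold G
  split_ifs with h
  · subst h
    rw [Nat.card_eq_one_iff_unique]
    constructor
    · constructor
      intro a b
      apply Subtype.ext; funext i; exact i.elim0
    · exact ⟨⟨fun i => i.elim0, fun i => i.elim0, by simp⟩⟩
  · have he : IsEmpty {x : Fin 0 → ℕ // StrictAnti x ∧ ∑ i, x i = n} := by
      constructor; rintro ⟨x, -, hx⟩
      simp at hx
      exact h hx.symm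
    exact Nat.card_of_isEmpty

lemma row_pos {d : ℕ} {x : Fin (d+1) → ℕ} (hsa : StrictAnti x)
    (hlast : x (Fin.last d) ≠ 0) (i : Fin (d+1)) : 1 ≤ x i := by
  have h1 : x (Fin.last d) ≤ x i := hsa.antitone (Fin.le_last i)
  omega

def eqvPos (d n : ℕ) (h : d + 1 ≤ n) :
    {x : Fin (d+1) → ℕ // (StrictAnti x ∧ ∑ i, x i = n) ∧ x (Fin.last d) ≠ 0} ≃
    {x : Fin (d+1) → ℕ // StrictAnti x ∧ ∑ i, x i = n - (d+1)} where
  toFun x := by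
    have hpos : ∀ i, 1 ≤ x.1 i := row_pos x.2.1.1 x.2.2
    refine ⟨fun i => x.1 i - 1, ?_, ?_⟩
    · intro i j hij
      show x.1 j - 1 < x.1 i - 1
      have := x.2.1.1 hij
      have := hpos j
      omega
    · have key : (∑ i, (x.1 i - 1)) + (d+1) = n := by
        calc (∑ i, (x.1 i - 1)) + (d+1)
            = (∑ i, (x.1 i - 1)) + ∑ _i : Fin (d+1), 1 := by simp
          _ = ∑ i, (x.1 i - 1 + 1) := by rw [← Finset.sum_add_distrib]
          _ = ∑ i, x.1 i := Finset.sum_congr rfl fun i _ => by have := hpos i; omega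
          _ = n := x.2.1.2
      show (∑ i, (x.1 i - 1)) = n - (d + 1)
      omega
  invFun y := by
    refine ⟨fun i => y.1 i + 1, ⟨?_, ?_⟩, ?_⟩
    · intro i j hij
      show y.1 j + 1 < y.1 i + 1
      have := y.2.1 hij; omega
    · show (∑ i, (y.1 i + 1)) = n
      rw [Finset.sum_add_distrib, y.2.2]
      simp
      omega
    · show y.1 (Fin.last d) + 1 ≠ 0
      simp
  left_inv x := by
    apply Subtype.ext
    funext i
    have hpos : 1 ≤ x.1 i := row_pos x.2.1.1 x.2.2 i
    show x.1 i - 1 + 1 = x.1 i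
    omega
  right_inv y := by
    apply Subtype.ext
    funext i
    show y.1 i + 1 - 1 = y.1 i
    omega

lemma isEmpty_pos (d n : ℕ) (h : n < d + 1) :
    IsEmpty {x : Fin (d+1) → ℕ // (StrictAnti x ∧ ∑ i, x i = n) ∧ x (Fin.last d) ≠ 0} := by
  constructor
  rintro ⟨x, ⟨hsa, hsum⟩, hlast⟩
  have hpos : ∀ i, 1 ≤ x i := row_pos hsa hlast
  have : (d+1) ≤ ∑ i, x i := by
    calc (d+1) = ∑ _i : Fin (d+1), 1 := by simp
    _ ≤ ∑ i, x i := Finset.sum_le_sum fun i _ => hpos i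
  omega

lemma zero_pos {d : ℕ} {x : Fin (d+1) → ℕ} (hsa : StrictAnti x)
    (hlast : x (Fin.last d) = 0) (i : Fin d) : 1 ≤ x i.castSucc := by
  have := hsa (Fin.castSucc_lt_last i)
  omega

lemma sum_castSucc_eq {d n : ℕ} {x : Fin (d+1) → ℕ} (hsum : ∑ i, x i = n)
    (hlast : x (Fin.last d) = 0) : ∑ i : Fin d, x i.castSucc = n := by
  rw [Fin.sum_univ_castSucc, hlast] at hsum
  omega

def eqvZero (d n : ℕ) (h : d ≤ n) :
    {x : Fin (d+1) → ℕ // (StrictAnti x ∧ ∑ i, x i = n) ∧ x (Fin.last d) = 0} ≃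
    {y : Fin d → ℕ // StrictAnti y ∧ ∑ i, y i = n - d} where
  toFun x := by
    have hpos : ∀ i : Fin d, 1 ≤ x.1 i.castSucc := zero_pos x.2.1.1 x.2.2
    refine ⟨fun i => x.1 i.castSucc - 1, ?_, ?_⟩
    · intro i j hij
      show x.1 j.castSucc - 1 < x.1 i.castSucc - 1
      have := x.2.1.1 (show i.castSucc < j.castSucc by exact_mod_cast hij)
      have := hpos j
      omega
    · have key : (∑ i : Fin d, (x.1 i.castSucc - 1)) + d = n := by
        calc (∑ i : Fin d, (x.1 i.castSucc - 1)) + d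
            = (∑ i : Fin d, (x.1 i.castSucc - 1)) + ∑ _i : Fin d, 1 := by simp
          _ = ∑ i : Fin d, (x.1 i.castSucc - 1 + 1) := by rw [← Finset.sum_add_distrib]
          _ = ∑ i : Fin d, x.1 i.castSucc := Finset.sum_congr rfl fun i _ => by
              have := hpos i; omega
          _ = n := sum_castSucc_eq x.2.1.2 x.2.2
      show (∑ i : Fin d, (x.1 i.castSucc - 1)) = n - d
      omega
  invFun y := by
    refine ⟨fun j => if hj : (j : ℕ) < d then y.1 ⟨j, hj⟩ + 1 else 0, ⟨?_, ?_⟩, ?_⟩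
    · intro i j hij
      by_cases hj : (j : ℕ) < d
      · have hi : (i : ℕ) < d := lt_of_lt_of_le (Fin.lt_iff_val_lt_val.mp hij) (by omega)
        have := y.2.1 (show (⟨i, hi⟩ : Fin d) < ⟨j, hj⟩ from hij)
        simp only [dif_pos hi, dif_pos hj]
        omega
      · have hi : (i : ℕ) < d := by
          have := Fin.lt_iff_val_lt_val.mp hij
          have := j.isLt
          omega
        simp only [dif_pos hi, dif_neg hj]
        omega
    · rw [Fin.sum_univ_castSucc]
      have hlast : ¬ ((Fin.last d : Fin (d+1)) : ℕ) < d := by simp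
      rw [dif_neg hlast]
      have key : ∀ i : Fin d,
          (if hj : ((i.castSucc : Fin (d+1)) : ℕ) < d then y.1 ⟨(i.castSucc : Fin (d+1)), hj⟩ + 1 else 0)
          = y.1 i + 1 := by
        intro i
        rw [dif_pos (by simpa using i.isLt)]
        congr
      rw [Finset.sum_congr rfl fun i _ => key i, Finset.sum_add_distrib, y.2.2]
      simp
      omega
    · simp
  left_inv x := by
    apply Subtype.ext
    funext j
    show (if hj : (j : ℕ) < d then x.1 (Fin.castSucc ⟨(j:ℕ), hj⟩) - 1 + 1 else 0) = x.1 j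
    by_cases hj : (j : ℕ) < d
    · have hpos : 1 ≤ x.1 ((⟨(j:ℕ), hj⟩ : Fin d).castSucc) := zero_pos x.2.1.1 x.2.2 _
      rw [dif_pos hj]
      have hcast : (Fin.castSucc (⟨(j:ℕ), hj⟩ : Fin d)) = j := by
        apply Fin.ext; simp
      rw [hcast]
      rw [hcast] at hpos
      omega
    · rw [dif_neg hj]
      have hlast : j = Fin.last d := by
        apply Fin.ext
        have := j.isLt
        simp; omega
      rw [hlast, x.2.2]
  right_inv y := by
    apply Subtype.ext
    funext i
    have hi : ((i.castSucc : Fin (d+1)) : ℕ) < d := by simpa using i.isLt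
    show (if hj : ((i.castSucc : Fin (d+1)) : ℕ) < d then y.1 ⟨((i.castSucc : Fin (d+1)) : ℕ), hj⟩ + 1 else 0) - 1 = y.1 i
    rw [dif_pos hi]
    have hcast : (⟨((i.castSucc : Fin (d+1)) : ℕ), hi⟩ : Fin d) = i := by
      apply Fin.ext; simp
    rw [hcast]
    simp

lemma isEmpty_zero (d n : ℕ) (h : n < d) :
    IsEmpty {x : Fin (d+1) → ℕ // (StrictAnti x ∧ ∑ i, x i = n) ∧ x (Fin.last d) = 0} := by
  constructor
  rintro ⟨x, ⟨hsa, hsum⟩, hlast⟩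
  have hpos : ∀ i : Fin d, 1 ≤ x i.castSucc := zero_pos hsa hlast
  have h2 : ∑ i : Fin d, x i.castSucc = n := sum_castSucc_eq hsum hlast
  have : d ≤ ∑ i : Fin d, x i.castSucc := by
    calc d = ∑ _i : Fin d, 1 := by simp
    _ ≤ _ := Finset.sum_le_sum fun i _ => hpos i
  omega

lemma G_succ (d n : ℕ) :
    G (d+1) n = (if d+1 ≤ n then G (d+1) (n-(d+1)) else 0) + (if d ≤ n then G d (n-d) else 0) := by
  unfold G
  rw [card_split (fun x : Fin (d+1) → ℕ => StrictAnti x ∧ ∑ i, x i = n)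
    (fun x => x (Fin.last d) ≠ 0)]
  congr 1
  · split_ifs with h
    · exact Nat.card_congr (eqvPos d n h)
    · haveI := isEmpty_pos d n (Nat.lt_of_not_le h)
      exact Nat.card_of_isEmpty
  · have heq : Nat.card {x : Fin (d+1) → ℕ //
        (StrictAnti x ∧ ∑ i, x i = n) ∧ ¬ x (Fin.last d) ≠ 0}
      = Nat.card {x : Fin (d+1) → ℕ //
        (StrictAnti x ∧ ∑ i, x i = n) ∧ x (Fin.last d) = 0} := by
      apply Nat.card_congr
      apply Equiv.subtypeEquivRight
      intro x
      simp
    rw [heq]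
    split_ifs with h
    · exact Nat.card_congr (eqvZero d n h)
    · haveI := isEmpty_zero d n (Nat.lt_of_not_le h)
      exact Nat.card_of_isEmpty

/-! ### one-row generating function -/

open PowerSeries

/-- generating function of `G d` -/
noncomputable def Fser (d : ℕ) : PowerSeries ℚ := PowerSeries.mk fun n => (G d n : ℚ)

/-- triangular numbers -/
def T : ℕ → ℕ
  | 0 => 0
  | d + 1 => T d + d

lemma Fser_zero : Fser 0 = 1 := by
  ext n
  rw [Fser, coeff_mk, PowerSeries.coeff_one, G_zero]
  split_ifs <;> simp

lemma Fser_rec (d : ℕ) :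
    (1 - (X : PowerSeries ℚ)^(d+1)) * Fser (d+1) = X^d * Fser d := by
  ext n
  rw [sub_mul, one_mul, map_sub, coeff_X_pow_mul', coeff_X_pow_mul',
    Fser, Fser, coeff_mk, coeff_mk, coeff_mk]
  have hcast : (G (d+1) n : ℚ)
      = (if d+1 ≤ n then (G (d+1) (n-(d+1)) : ℚ) else 0)
        + (if d ≤ n then (G d (n-d) : ℚ) else 0) := by
    rw [G_succ d n]
    push_cast
    split_ifs <;> simp
  rw [hcast]
  split_ifs <;> ring

lemma qp_mul_Fser (d : ℕ) : qp d * Fser d = (X : PowerSeries ℚ) ^ T d := by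
  induction d with
  | zero => simp [qp, Fser_zero, T]
  | succ d ih =>
      have hqp : qp (d+1) = qp d * (1 - (X : PowerSeries ℚ)^(d+1)) := by
        rw [qp, qp, Finset.prod_range_succ]
      rw [hqp, mul_assoc, Fser_rec d, show T (d+1) = T d + d from rfl, pow_add,
        ← mul_assoc, mul_comm (qp d) ((X : PowerSeries ℚ)^d), mul_assoc, ih]
      ring

lemma two_T (d : ℕ) : 2 * T d + 2 * d = d ^ 2 + d := by
  induction d with
  | zero => simp [T]
  | succ d ih =>
      have : T (d+1) = T d + d := rfl
      rw [this]
      ring_nf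
      ring_nf at ih
      omega

end FrobAux

namespace FrobAux

open PowerSeries

variable {d n : ℕ}

lemma frob_sum {d : ℕ} (x y : Fin d → ℕ) :
    ∑ i, (x i + y i + 1) = (∑ i, x i) + (∑ i, y i) + d := by
  rw [Finset.sum_add_distrib, Finset.sum_add_distrib]
  simp

lemma frob_d_le {p : (Fin d → ℕ) × (Fin d → ℕ)} (hp : IsFrob d n p) : d ≤ n := by
  have := hp.2.2
  rw [frob_sum] at this
  omega

lemma frob_bound {p : (Fin d → ℕ) × (Fin d → ℕ)} (hp : IsFrob d n p) (i : Fin d) :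
    p.1 i ≤ n ∧ p.2 i ≤ n := by
  have h1 : p.1 i + p.2 i + 1 ≤ ∑ j, (p.1 j + p.2 j + 1) :=
    Finset.single_le_sum (f := fun j => p.1 j + p.2 j + 1)
      (fun j _ => Nat.zero_le _) (Finset.mem_univ i)
  rw [hp.2.2] at h1
  omega

instance frobFinite (d n : ℕ) : Finite {p : (Fin d → ℕ) × (Fin d → ℕ) // IsFrob d n p} := by
  apply Finite.of_injective
    (fun p => ((fun i => (⟨p.1.1 i, Nat.lt_succ_of_le (frob_bound p.2 i).1⟩ : Fin (n+1)),
      fun i => (⟨p.1.2 i, Nat.lt_succ_of_le (frob_bound p.2 i).2⟩ : Fin (n+1)))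
      : (Fin d → Fin (n+1)) × (Fin d → Fin (n+1))))
  intro a b h
  have h1 := congrArg Prod.fst h
  have h2 := congrArg Prod.snd h
  apply Subtype.ext
  apply Prod.ext
  · funext i
    have := congrFun h1 i
    simpa [Fin.mk.injEq] using this
  · funext i
    have := congrFun h2 i
    simpa [Fin.mk.injEq] using this

lemma frobQFinite (d n : ℕ) (Q : (Fin d → ℕ) × (Fin d → ℕ) → Prop) :
    Finite {p : (Fin d → ℕ) × (Fin d → ℕ) // IsFrob d n p ∧ Q p} := by
  apply Finite.of_injective
    (fun p => (⟨p.1, p.2.1⟩ : {p : (Fin d → ℕ) × (Fin d → ℕ) // IsFrob d n p}))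
  intro a b h
  simp only [Subtype.mk.injEq] at h
  exact Subtype.ext h

/-- count of all Frobenius symbols -/
noncomputable def An (d n : ℕ) : ℕ :=
  Nat.card {p : (Fin d → ℕ) × (Fin d → ℕ) // IsFrob d n p}

/-- count with positive last column -/
noncomputable def Pn (d n : ℕ) : ℕ :=
  Nat.card {p : (Fin d → ℕ) × (Fin d → ℕ) // IsFrob d n p ∧ LastPos d p}

/-- last column strictly negative -/
def NegLast (d : ℕ) (p : (Fin d → ℕ) × (Fin d → ℕ)) : Prop :=
  ∀ h : d - 1 < d, p.1 ⟨d - 1, h⟩ < p.2 ⟨d - 1, h⟩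

/-- last column nonnegative -/
def GeLast (d : ℕ) (p : (Fin d → ℕ) × (Fin d → ℕ)) : Prop :=
  ∀ h : d - 1 < d, p.2 ⟨d - 1, h⟩ ≤ p.1 ⟨d - 1, h⟩

/-- the equivalence given by swapping the two rows -/
def swapEquiv (d n : ℕ) :
    {p : (Fin d → ℕ) × (Fin d → ℕ) // IsFrob d n p ∧ NegLast d p} ≃
    {p : (Fin d → ℕ) × (Fin d → ℕ) // IsFrob d n p ∧ LastPos d p} where
  toFun p := ⟨(p.1.2, p.1.1),
    ⟨p.2.1.2.1, p.2.1.1, by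
      rw [show (∑ i, (p.1.2 i + p.1.1 i + 1)) = ∑ i, (p.1.1 i + p.1.2 i + 1) from
        Finset.sum_congr rfl fun i _ => by ring]
      exact p.2.1.2.2⟩,
    fun h => p.2.2 h⟩
  invFun p := ⟨(p.1.2, p.1.1),
    ⟨p.2.1.2.1, p.2.1.1, by
      rw [show (∑ i, (p.1.2 i + p.1.1 i + 1)) = ∑ i, (p.1.1 i + p.1.2 i + 1) from
        Finset.sum_congr rfl fun i _ => by ring]
      exact p.2.1.2.2⟩,
    fun h => p.2.2 h⟩
  left_inv p := rfl
  right_inv p := rfl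

lemma frob_top_pos (hd : 1 ≤ d) {p : (Fin d → ℕ) × (Fin d → ℕ)}
    (hp : IsFrob d n p) (hl : LastPos d p) (i : Fin d) : 1 ≤ p.1 i := by
  have hld : d - 1 < d := by omega
  have h1 : p.1 ⟨d-1, hld⟩ ≤ p.1 i := hp.1.antitone (by
    show (i : ℕ) ≤ d - 1
    have := i.isLt
    omega)
  have h2 := hl hld
  unfold ColPos at h2
  omega

/-- the equivalence given by decreasing the top row by one -/
def shiftEquiv (d n : ℕ) (hd : 1 ≤ d) (h : d ≤ n) :
    {p : (Fin d → ℕ) × (Fin d → ℕ) // IsFrob d n p ∧ LastPos d p} ≃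
    {p : (Fin d → ℕ) × (Fin d → ℕ) // IsFrob d (n - d) p ∧ GeLast d p} where
  toFun p := by
    have hpos : ∀ i, 1 ≤ p.1.1 i := frob_top_pos hd p.2.1 p.2.2
    refine ⟨((fun i => p.1.1 i - 1), p.1.2), ⟨?_, p.2.1.2.1, ?_⟩, ?_⟩
    · intro i j hij
      show p.1.1 j - 1 < p.1.1 i - 1
      have := p.2.1.1 hij
      have := hpos j
      omega
    · show (∑ i, (p.1.1 i - 1 + p.1.2 i + 1)) = n - d
      have h1 : (∑ i, (p.1.1 i - 1 + p.1.2 i + 1)) = ∑ i, (p.1.1 i + p.1.2 i) :=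
        Finset.sum_congr rfl fun i _ => by have := hpos i; omega
      have h2 := p.2.1.2.2
      rw [frob_sum] at h2
      rw [h1, Finset.sum_add_distrib]
      omega
    · intro hld
      show p.1.2 ⟨d-1, hld⟩ ≤ p.1.1 ⟨d-1, hld⟩ - 1
      have := p.2.2 hld
      unfold ColPos at this
      omega
  invFun p := by
    refine ⟨((fun i => p.1.1 i + 1), p.1.2), ⟨?_, p.2.1.2.1, ?_⟩, ?_⟩
    · intro i j hij
      show p.1.1 j + 1 < p.1.1 i + 1
      have := p.2.1.1 hij
      omega
    · show (∑ i, (p.1.1 i + 1 + p.1.2 i + 1)) = n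
      have h1 : (∑ i, (p.1.1 i + 1 + p.1.2 i + 1)) = ∑ i, ((p.1.1 i + p.1.2 i + 1) + 1) :=
        Finset.sum_congr rfl fun i _ => by ring
      rw [h1, Finset.sum_add_distrib, p.2.1.2.2]
      simp
      omega
    · intro hld
      show ColPos d _ ⟨d-1, hld⟩
      have := p.2.2 hld
      show p.1.2 ⟨d-1, hld⟩ < p.1.1 ⟨d-1, hld⟩ + 1
      omega
  left_inv p := by
    have hpos : ∀ i, 1 ≤ p.1.1 i := frob_top_pos hd p.2.1 p.2.2
    apply Subtype.ext
    apply Prod.ext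
    · funext i
      show p.1.1 i - 1 + 1 = p.1.1 i
      have := hpos i
      omega
    · rfl
  right_inv p := by
    apply Subtype.ext
    apply Prod.ext
    · funext i
      show p.1.1 i + 1 - 1 = p.1.1 i
      omega
    · rfl

lemma frob_isEmpty (h : n < d) (Q : (Fin d → ℕ) × (Fin d → ℕ) → Prop) :
    IsEmpty {p : (Fin d → ℕ) × (Fin d → ℕ) // IsFrob d n p ∧ Q p} := by
  constructor
  rintro ⟨p, hp, -⟩
  have := frob_d_le hp
  omega

lemma notNegLast_iff (hd : 1 ≤ d) (p : (Fin d → ℕ) × (Fin d → ℕ)) :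
    ¬ NegLast d p ↔ GeLast d p := by
  have hld : d - 1 < d := by omega
  constructor
  · intro hn hl
    by_contra hlt
    exact hn (fun h' => by convert Nat.lt_of_not_le hlt using 2)
  · intro hg hn
    exact absurd (hn hld) (Nat.not_lt.mpr (hg hld))

lemma key_identity (hd : 1 ≤ d) (n : ℕ) :
    Pn d n + (if d ≤ n then Pn d (n - d) else 0)
      = (if d ≤ n then An d (n - d) else 0) := by
  split_ifs with h
  · -- Pn n = card {IsFrob (n-d) ∧ GeLast}
    have h1 : Pn d n = Nat.card {p : (Fin d → ℕ) × (Fin d → ℕ) //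
        IsFrob d (n - d) p ∧ GeLast d p} :=
      Nat.card_congr (shiftEquiv d n hd h)
    have h2 : Pn d (n - d) = Nat.card {p : (Fin d → ℕ) × (Fin d → ℕ) //
        IsFrob d (n - d) p ∧ NegLast d p} :=
      (Nat.card_congr (swapEquiv d (n - d))).symm
    haveI := frobQFinite d (n - d) (NegLast d)
    haveI : Finite {p : (Fin d → ℕ) × (Fin d → ℕ) // IsFrob d (n - d) p} :=
      frobFinite d (n - d)
    have h3 := card_split (fun p : (Fin d → ℕ) × (Fin d → ℕ) => IsFrob d (n - d) p)
      (fun p => NegLast d p)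
    have h4 : Nat.card {p : (Fin d → ℕ) × (Fin d → ℕ) //
        IsFrob d (n - d) p ∧ ¬ NegLast d p}
        = Nat.card {p : (Fin d → ℕ) × (Fin d → ℕ) //
        IsFrob d (n - d) p ∧ GeLast d p} := by
      apply Nat.card_congr
      apply Equiv.subtypeEquivRight
      intro p
      rw [notNegLast_iff hd]
    rw [h1, h2, An]
    rw [h3, h4]
    ring
  · have h1 : Pn d n = 0 := by
      haveI := frob_isEmpty (show n < d by omega) (LastPos d)
      exact Nat.card_of_isEmpty
    rw [h1]

/-- Frobenius symbols decompose as a pair of rows -/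
def frobEquiv (d n : ℕ) (h : d ≤ n) :
    {p : (Fin d → ℕ) × (Fin d → ℕ) // IsFrob d n p} ≃
    (Σ ab : {ab : ℕ × ℕ // ab ∈ Finset.HasAntidiagonal.antidiagonal (n - d)},
      {x : Fin d → ℕ // StrictAnti x ∧ ∑ i, x i = ab.1.1} ×
      {y : Fin d → ℕ // StrictAnti y ∧ ∑ i, y i = ab.1.2}) where
  toFun p := ⟨⟨(∑ i, p.1.1 i, ∑ i, p.1.2 i), by
      rw [Finset.HasAntidiagonal.mem_antidiagonal]
      have h2 := p.2.2.2
      rw [frob_sum] at h2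
      omega⟩,
    ⟨p.1.1, p.2.1, rfl⟩, ⟨p.1.2, p.2.2.1, rfl⟩⟩
  invFun s := ⟨(s.2.1.1, s.2.2.1), s.2.1.2.1, s.2.2.2.1, by
    rw [frob_sum, s.2.1.2.2, s.2.2.2.2]
    have := Finset.HasAntidiagonal.mem_antidiagonal.mp s.1.2
    omega⟩
  left_inv p := rfl
  right_inv s := by
    rcases s with ⟨⟨⟨a, b⟩, hab⟩, ⟨x, hx, hxs⟩, ⟨y, hy, hys⟩⟩
    have hxs' : ∑ i, x i = a := hxs
    have hys' : ∑ i, y i = b := hys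
    subst hxs'
    subst hys'
    rfl

lemma An_eq (d n : ℕ) :
    An d n = if d ≤ n then
      ∑ ab ∈ Finset.HasAntidiagonal.antidiagonal (n - d), G d ab.1 * G d ab.2 else 0 := by
  split_ifs with h
  · rw [An, Nat.card_congr (frobEquiv d n h)]
    letI : ∀ m : ℕ, Fintype {x : Fin d → ℕ // StrictAnti x ∧ ∑ i, x i = m} :=
      fun m => Fintype.ofFinite _
    rw [Nat.card_eq_fintype_card, Fintype.card_sigma]
    rw [← Finset.sum_coe_sort (Finset.HasAntidiagonal.antidiagonal (n - d))
      (fun ab => G d ab.1 * G d ab.2)]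
    apply Finset.sum_congr rfl
    intro ab _
    rw [Fintype.card_prod, G, G, Nat.card_eq_fintype_card, Nat.card_eq_fintype_card]
  · rw [An]
    haveI : IsEmpty {p : (Fin d → ℕ) × (Fin d → ℕ) // IsFrob d n p} := by
      constructor
      rintro ⟨p, hp⟩
      have := frob_d_le hp
      omega
    exact Nat.card_of_isEmpty

/-! ### power series assembly -/

/-- generating function for `An` -/
noncomputable def Aser (d : ℕ) : PowerSeries ℚ := PowerSeries.mk fun n => (An d n : ℚ)

/-- generating function for `Pn` -/
noncomputable def Pser (d : ℕ) : PowerSeries ℚ := PowerSeries.mk fun n => (Pn d n : ℚ)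

lemma Aser_eq (d : ℕ) : Aser d = (X : PowerSeries ℚ)^d * (Fser d * Fser d) := by
  ext n
  rw [Aser, coeff_mk, coeff_X_pow_mul', An_eq]
  split_ifs with h
  · rw [coeff_mul]
    push_cast
    apply Finset.sum_congr rfl
    intro ab _
    rw [Fser, coeff_mk, coeff_mk]
  · simp

lemma onePlus_mul_Pser (d : ℕ) (hd : 1 ≤ d) :
    (1 + (X : PowerSeries ℚ)^d) * Pser d = (X : PowerSeries ℚ)^d * Aser d := by
  ext n
  rw [add_mul, one_mul, map_add, coeff_X_pow_mul', coeff_X_pow_mul',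
    Pser, Aser, coeff_mk, coeff_mk, coeff_mk]
  have hkey := key_identity hd n
  split_ifs with h
  · rw [if_pos h, if_pos h] at hkey
    exact_mod_cast hkey
  · rw [if_neg h, if_neg h] at hkey
    exact_mod_cast hkey

lemma constantCoeff_qp (d : ℕ) : PowerSeries.constantCoeff (qp d) = 1 := by
  rw [qp, map_prod]
  apply Finset.prod_eq_one
  intro i _
  rw [map_sub, map_one, map_pow, PowerSeries.constantCoeff_X]
  simp

lemma final (d : ℕ) (hd : 1 ≤ d) :
    Pser d = (X : PowerSeries ℚ) ^ (d ^ 2 + d) * ((qp d) ^ 2 * (1 + (X : PowerSeries ℚ) ^ d))⁻¹ := by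
  set u : PowerSeries ℚ := (qp d) ^ 2 * (1 + (X : PowerSeries ℚ) ^ d) with hu_def
  have hu : PowerSeries.constantCoeff u ≠ 0 := by
    rw [hu_def, map_mul, map_pow, constantCoeff_qp, map_add, map_one, map_pow,
      PowerSeries.constantCoeff_X]
    rw [zero_pow (by omega : d ≠ 0)]
    norm_num
  have hmain : u * Pser d = (X : PowerSeries ℚ) ^ (d ^ 2 + d) := by
    calc u * Pser d
        = (qp d)^2 * ((1 + (X : PowerSeries ℚ)^d) * Pser d) := by rw [hu_def]; ring
      _ = (qp d)^2 * ((X : PowerSeries ℚ)^d * Aser d) := by rw [onePlus_mul_Pser d hd]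
      _ = (qp d)^2 * ((X : PowerSeries ℚ)^d * ((X : PowerSeries ℚ)^d * (Fser d * Fser d))) := by
          rw [Aser_eq]
      _ = (qp d * Fser d) * (qp d * Fser d) * (X : PowerSeries ℚ)^d * (X : PowerSeries ℚ)^d := by
          ring
      _ = (X : PowerSeries ℚ)^(T d) * (X : PowerSeries ℚ)^(T d)
            * (X : PowerSeries ℚ)^d * (X : PowerSeries ℚ)^d := by rw [qp_mul_Fser]
      _ = (X : PowerSeries ℚ)^(T d + T d + d + d) := by rw [pow_add, pow_add, pow_add]
      _ = (X : PowerSeries ℚ)^(d ^ 2 + d) := by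
          congr 1
          have := two_T d
          omega
  calc Pser d = (u⁻¹ * u) * Pser d := by rw [PowerSeries.inv_mul_cancel u hu, one_mul]
    _ = u⁻¹ * (u * Pser d) := by ring
    _ = u⁻¹ * (X : PowerSeries ℚ) ^ (d ^ 2 + d) := by rw [hmain]
    _ = _ := by ring

end FrobAux

/-- `Σ_n a⁺(n;d) qⁿ = q^{d²+d}/((q;q)_d² (1+q^d))`, where `a⁺(n;d)` is the number of
partitions of `n` whose Frobenius symbol has exactly `d` columns, the last of which
is positive. -/
theorem stmt_12 (d : ℕ) (hd : 1 ≤ d) :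
    (PowerSeries.mk fun n =>
      ((Nat.card {p : (Fin d → ℕ) × (Fin d → ℕ) //
        IsFrob d n p ∧ LastPos d p} : ℕ) : ℚ))
    = PowerSeries.X ^ (d ^ 2 + d) * ((qp d) ^ 2 * (1 + PowerSeries.X ^ d))⁻¹ := by
  exact FrobAux.final d hd
end

section
/- For d ≥ m ≥ 1 and all n, a⁻_m(n;d) = a⁺_m(n+d; d), where a⁺_m(n;d) (resp. a⁻_m(n;d)) is the number of partitions of n whose Frobenius symbol has exactly d columns and exactly m parity blocks with the last block positive (resp. negative). -/
open Finset
open scoped Classical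

/-- If the column parities of `p` are pointwise opposite to those of `q`, they have
the same number of parity changes. -/
lemma numChanges_flip (d : ℕ) (p q : (Fin d → ℕ) × (Fin d → ℕ))
    (h : ∀ i, ColPos d p i ↔ ¬ ColPos d q i) : numChanges d p = numChanges d q := by
  unfold numChanges
  congr 1
  apply Finset.filter_congr
  intro i _
  constructor
  · rintro ⟨hlt, hne⟩
    exact ⟨hlt, fun hiff => hne (by rw [h i, h ⟨(i : ℕ) + 1, hlt⟩]; tauto)⟩
  · rintro ⟨hlt, hne⟩
    exact ⟨hlt, fun hiff => hne (by rw [h i, h ⟨(i : ℕ) + 1, hlt⟩] at hiff; tauto)⟩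

/-- `a⁻_m(n;d) = a⁺_m(n+d;d)` for `d ≥ m ≥ 1`: the number of partitions of `n` whose
Frobenius symbol has exactly `d` columns and exactly `m` parity blocks with the last
block negative equals the number of partitions of `n+d` with exactly `d` columns and
exactly `m` parity blocks with the last block positive. -/
theorem stmt_14 (d m n : ℕ) (hm : 1 ≤ m) (hmd : m ≤ d) :
    Nat.card {p : (Fin d → ℕ) × (Fin d → ℕ) //
        IsFrob d n p ∧ numChanges d p + 1 = m ∧ LastNeg d p}
      = Nat.card {p : (Fin d → ℕ) × (Fin d → ℕ) //
        IsFrob d (n + d) p ∧ numChanges d p + 1 = m ∧ LastPos d p} := by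
  have hd : 0 < d := lt_of_lt_of_le hm hmd
  have hd1 : d - 1 < d := Nat.sub_lt hd one_pos
  apply Nat.card_congr
  refine
    { toFun := fun ⟨p, hp⟩ => ⟨((fun i => p.2 i + 1), p.1), ?_⟩
      invFun := fun ⟨q, hq⟩ => ⟨(q.2, fun i => q.1 i - 1), ?_⟩
      left_inv := ?_
      right_inv := ?_ }
  · obtain ⟨⟨h1, h2, h3⟩, h4, h5⟩ := hp
    set F : (Fin d → ℕ) × (Fin d → ℕ) := ((fun i => p.2 i + 1), p.1) with hF
    have hflip : ∀ i, ColPos d F i ↔ ¬ ColPos d p i := by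
      intro i
      simp only [ColPos, hF]
      omega
    refine ⟨⟨fun a b hab => by simpa [hF] using h2 hab, h1, ?_⟩, ?_, ?_⟩
    · have : ∀ i : Fin d, F.1 i + F.2 i + 1 = (p.1 i + p.2 i + 1) + 1 := by
        intro i; simp only [hF]; omega
      rw [Finset.sum_congr rfl fun i _ => this i, Finset.sum_add_distrib]
      simp [h3]
    · rw [numChanges_flip d F p hflip]; exact h4
    · intro h; rw [hflip]; intro hc; exact (h5 h) hc
  · obtain ⟨⟨h1, h2, h3⟩, h4, h5⟩ := hq
    have hpos : ∀ i : Fin d, 1 ≤ q.1 i := by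
      intro i
      have hlast : q.2 ⟨d - 1, hd1⟩ < q.1 ⟨d - 1, hd1⟩ := h5 hd1
      have hle : q.1 ⟨d - 1, hd1⟩ ≤ q.1 i :=
        h1.antitone (Fin.le_def.mpr (by simp; omega))
      omega
    set G : (Fin d → ℕ) × (Fin d → ℕ) := (q.2, fun i => q.1 i - 1) with hG
    have hflip : ∀ i, ColPos d G i ↔ ¬ ColPos d q i := by
      intro i
      have := hpos i
      simp only [ColPos, hG]
      omega
    refine ⟨⟨h2, fun a b hab => ?_, ?_⟩, ?_, ?_⟩
    · have := h1 hab
      have := hpos b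
      simp only [hG]
      omega
    · have hterm : ∀ i : Fin d, G.1 i + G.2 i + 1 + 1 = q.1 i + q.2 i + 1 := by
        intro i; have := hpos i; simp only [hG]; omega
      show (∑ i, (G.1 i + G.2 i + 1)) = n
      have heq : (∑ i, (G.1 i + G.2 i + 1)) + ∑ _i : Fin d, 1 = n + d := by
        rw [← Finset.sum_add_distrib, ← h3]
        exact Finset.sum_congr rfl fun i _ => hterm i
      simp only [Finset.sum_const, Finset.card_univ, Fintype.card_fin, smul_eq_mul,
        mul_one] at heq
      simp only [hG] at heq ⊢
      omega
    · rw [numChanges_flip d G q hflip]; exact h4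
    · intro h; rw [hflip]; intro hc; exact hc (h5 h)
  · rintro ⟨p, hp⟩
    ext i <;> simp
  · rintro ⟨q, hq⟩
    obtain ⟨⟨h1, h2, h3⟩, h4, h5⟩ := hq
    have hpos : ∀ i : Fin d, 1 ≤ q.1 i := by
      intro i
      have hlast : q.2 ⟨d - 1, hd1⟩ < q.1 ⟨d - 1, hd1⟩ := h5 hd1
      have hle : q.1 ⟨d - 1, hd1⟩ ≤ q.1 i :=
        h1.antitone (Fin.le_def.mpr (by simp; omega))
      omega
    ext i
    · have := hpos i
      simp; omega
    · simp
end
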